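/- arXiv:2202.13370 — 6 statements merged into one kernel-verified Lean document; each statement's English description precedes it below -/
import Mathlib

section
/- The map dist : L⁰(V_r) × L⁰(V_r) → ℤ, dist([U₁],[U₂]) = n₁₂ + n₂₁, is a metric on the set L⁰(V_r) of homothety classes of R-submodules of V_r: it is non-negative, vanishes exactly on pairs of equal classes, is symmetric, and satisfies the triangle inequality dist([U₁],[U₂]) ≤ dist([U₁],[U₃]) + dist([U₃],[U₂]) for all classes [U₁],[U₂],[U₃]. -/
open Pointwise

namespace SphericalSubmoduleCodes

variable {R : Type*} [CommRing R] {V : Type*} [AddCommGroup V] [Module R V]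

/-- `nmin π U₁ U₂ = min {m ≥ 0 : π^m U₁ ⊆ U₂}`. -/
noncomputable def nmin (π : R) (U₁ U₂ : Submodule R V) : ℕ :=
  sInf {m : ℕ | (π ^ m) • U₁ ≤ U₂}

/-- The distance `dist(U₁,U₂) = min{m : π^m U₁ ⊆ U₂} + min{n : π^n U₂ ⊆ U₁}`
(used for boundary submodules, where `Ũ = U`). -/
noncomputable def distMod (π : R) (U₁ U₂ : Submodule R V) : ℕ :=
  nmin π U₁ U₂ + nmin π U₂ U₁

/-- `m_U = max {0 ≤ m ≤ r : U ⊆ π^m V}`. -/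
noncomputable def mExp (π : R) (r : ℕ) (U : Submodule R V) : ℕ :=
  sSup {m : ℕ | m ≤ r ∧ U ≤ (π ^ m) • (⊤ : Submodule R V)}

/-- `Ũ`, the unique maximal submodule with `π^{m_U} Ũ = U`: the kernel of
`x ↦ π^{m_U} x + U`. -/
noncomputable def tilde (π : R) (r : ℕ) (U : Submodule R V) : Submodule R V :=
  U.comap ((π ^ mExp π r U) • (LinearMap.id : V →ₗ[R] V))

/-- The boundary `∂L(V_r) = {U : π^{r-1} V ⊄ U and U ⊄ π V}`. -/
def boundary (π : R) (r : ℕ) : Set (Submodule R V) :=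
  {U | ¬ ((π ^ (r - 1)) • (⊤ : Submodule R V) ≤ U) ∧ ¬ (U ≤ π • (⊤ : Submodule R V))}

/-- The minimum distance of a code of (boundary) submodules. -/
noncomputable def minDist (π : R) (C : Set (Submodule R V)) : ℕ :=
  sInf {n : ℕ | ∃ U₁ ∈ C, ∃ U₂ ∈ C, U₁ ≠ U₂ ∧ distMod π U₁ U₂ = n}

/-- homothety: `U ∼ U' ↔ Ũ = Ũ'`. -/
noncomputable def homSetoid (π : R) (r : ℕ) : Setoid (Submodule R V) :=
  Setoid.ker (tilde π r)

/-- The distance on homothety classes. -/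
noncomputable def distClass (π : R) (r : ℕ) :
    Quotient (homSetoid (V := V) π r) → Quotient (homSetoid (V := V) π r) → ℕ :=
  Quotient.lift₂
    (fun U₁ U₂ => nmin π (tilde π r U₁) (tilde π r U₂) + nmin π (tilde π r U₂) (tilde π r U₁))
    (by
      intro a₁ b₁ a₂ b₂ h₁ h₂
      have ha : tilde π r a₁ = tilde π r a₂ := h₁
      have hb : tilde π r b₁ = tilde π r b₂ := h₂
      simp only [ha, hb])

/-- The Grassmannian: free rank-`n` submodules. -/
def Grass (R : Type*) [CommRing R] {V : Type*} [AddCommGroup V] [Module R V]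
    (n : ℕ) : Set (Submodule R V) :=
  {U | Module.Free R U ∧ Module.finrank R U = n}

/-- `binom(a,b)_X = ∏_{i=0}^{b-1} (1 - X^{a-i})/(1 - X^{b-i})`. -/
def qbinom (X : ℚ) (a b : ℕ) : ℚ :=
  ∏ i ∈ Finset.range b, (1 - X ^ (a - i)) / (1 - X ^ (b - i))

end SphericalSubmoduleCodes

namespace SphericalSubmoduleCodes

section Aux

variable {R : Type*} [CommRing R] {V : Type*} [AddCommGroup V] [Module R V]

lemma nmin_le' (π : R) (U₁ U₂ : Submodule R V) {m : ℕ} (h : (π ^ m) • U₁ ≤ U₂) :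
    nmin π U₁ U₂ ≤ m :=
  Nat.sInf_le h

lemma nmin_spec' (π : R) {r : ℕ} (hπ : π ^ r = 0) (U₁ U₂ : Submodule R V) :
    (π ^ nmin π U₁ U₂) • U₁ ≤ U₂ := by
  have hne : {m : ℕ | (π ^ m) • U₁ ≤ U₂}.Nonempty := by
    refine ⟨r, ?_⟩
    simp only [Set.mem_setOf_eq, hπ]
    rintro x ⟨y, -, rfl⟩
    simp
  exact Nat.sInf_mem hne

lemma nmin_self' (π : R) (U : Submodule R V) : nmin π U U = 0 :=
  Nat.le_zero.mp (nmin_le' π U U (by simp [pow_zero, one_smul]))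

lemma nmin_triangle' (π : R) {r : ℕ} (hπ : π ^ r = 0) (A B C : Submodule R V) :
    nmin π A B ≤ nmin π A C + nmin π C B := by
  apply nmin_le'
  have h1 : (π ^ nmin π A C) • A ≤ C := nmin_spec' π hπ A C
  have h2 : (π ^ nmin π C B) • C ≤ B := nmin_spec' π hπ C B
  calc (π ^ (nmin π A C + nmin π C B)) • A
      = (π ^ nmin π C B) • ((π ^ nmin π A C) • A) := by
        rw [smul_smul, ← pow_add, Nat.add_comm]
    _ ≤ (π ^ nmin π C B) • C := smul_mono_right _ h1
    _ ≤ B := h2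

end Aux

/-- The map `dist : L⁰(V_r) × L⁰(V_r) → ℤ` is a metric on the set of homothety
classes of `R`-submodules of `V_r`. -/
theorem dist_is_metric
    {R : Type*} [CommRing R] [Fintype R] [IsLocalRing R]
    {V : Type*} [AddCommGroup V] [Module R V]
    (d r : ℕ) (hd : 2 ≤ d) (hr : 1 ≤ r) (b : Module.Basis (Fin d) R V)
    (π : R) (hmax : IsLocalRing.maximalIdeal R = Ideal.span {π})
    (hπr : π ^ r = 0) (hπr' : π ^ (r - 1) ≠ 0) :
    ∀ c₁ c₂ c₃ : Quotient (homSetoid (V := V) π r),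
      (0 : ℤ) ≤ (distClass π r c₁ c₂ : ℤ) ∧
      (distClass π r c₁ c₂ = 0 ↔ c₁ = c₂) ∧
      distClass π r c₁ c₂ = distClass π r c₂ c₁ ∧
      distClass π r c₁ c₂ ≤ distClass π r c₁ c₃ + distClass π r c₃ c₂ := by
  intro c₁ c₂ c₃
  induction c₁ using Quotient.ind with | _ U₁ =>
  induction c₂ using Quotient.ind with | _ U₂ =>
  induction c₃ using Quotient.ind with | _ U₃ =>
  have hdist : ∀ a b : Submodule R V,
      distClass π r ⟦a⟧ ⟦b⟧ = nmin π (tilde π r a) (tilde π r b) +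
        nmin π (tilde π r b) (tilde π r a) := fun _ _ => rfl
  refine ⟨Int.ofNat_nonneg _, ?_, ?_, ?_⟩
  · rw [hdist]
    constructor
    · intro h
      have h1 : nmin π (tilde π r U₁) (tilde π r U₂) = 0 := Nat.eq_zero_of_add_eq_zero_right h
      have h2 : nmin π (tilde π r U₂) (tilde π r U₁) = 0 := Nat.eq_zero_of_add_eq_zero_left h
      have e1 : (tilde π r U₁) ≤ (tilde π r U₂) := by
        have := nmin_spec' π hπr (tilde π r U₁) (tilde π r U₂)
        rwa [h1, pow_zero, one_smul] at this
      have e2 : (tilde π r U₂) ≤ (tilde π r U₁) := by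
        have := nmin_spec' π hπr (tilde π r U₂) (tilde π r U₁)
        rwa [h2, pow_zero, one_smul] at this
      exact Quotient.sound (le_antisymm e1 e2)
    · intro h
      have : (tilde π r U₁) = (tilde π r U₂) := Quotient.exact h
      rw [this, nmin_self']
  · rw [hdist, hdist, Nat.add_comm]
  · rw [hdist, hdist, hdist]
    have t1 := nmin_triangle' π hπr (tilde π r U₁) (tilde π r U₂) (tilde π r U₃)
    have t2 := nmin_triangle' π hπr (tilde π r U₂) (tilde π r U₁) (tilde π r U₃)
    omega

end SphericalSubmoduleCodes
end

section
/- For each ℓ ∈ {0,…,r}: (1) the sphere ∂B_ℓ([V_r]) = {[U] ∈ L⁰(V_r) : dist([U],[V_r]) = ℓ} equals {[U] ∈ L⁰(V_r) : |[U]| = r − ℓ + 1}; (2) the ball B_ℓ([V_r]) = {[U] ∈ L⁰(V_r) : dist([U],[V_r]) ≤ ℓ} equals {[U] ∈ L⁰(V_r) : |[U]| ≥ r − ℓ + 1}. Moreover, the boundary ∂L(V_r) coincides with the sphere ∂B_r([V_r]), i.e. with the set of homothety classes consisting of exactly one submodule. -/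
open Pointwise

namespace SphericalSubmoduleCodes

section Aux

variable {R : Type*} [CommRing R] {V : Type*} [AddCommGroup V] [Module R V]
variable {π : R} {r : ℕ}

lemma aux_mem_smul {a : R} {S : Submodule R V} {x : V} :
    x ∈ a • S ↔ ∃ s ∈ S, a • s = x := Iff.rfl

lemma aux_smul_le_smul {a : R} {S T : Submodule R V} (h : S ≤ T) : a • S ≤ a • T := by
  intro x hx
  rcases aux_mem_smul.1 hx with ⟨s, hs, rfl⟩
  exact aux_mem_smul.2 ⟨s, h hs, rfl⟩

lemma aux_smul_le_top {a : R} {S : Submodule R V} : a • S ≤ a • (⊤ : Submodule R V) :=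
  aux_smul_le_smul le_top

lemma aux_pow_smul_le {j k : ℕ} (h : j ≤ k) :
    (π ^ k) • (⊤ : Submodule R V) ≤ (π ^ j) • ⊤ := by
  intro x hx
  rcases aux_mem_smul.1 hx with ⟨s, -, rfl⟩
  refine aux_mem_smul.2 ⟨(π ^ (k - j)) • s, Submodule.mem_top, ?_⟩
  rw [smul_smul, ← pow_add, show j + (k - j) = k by omega]

lemma aux_pow_ne (hπr' : π ^ (r - 1) ≠ 0) {j : ℕ} (hj : π ^ j = 0) : r ≤ j := by
  by_contra h
  push_neg at h
  apply hπr'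
  rw [show r - 1 = j + (r - 1 - j) by omega, pow_add, hj, zero_mul]

lemma aux_ann [IsLocalRing R] (hmax : IsLocalRing.maximalIdeal R = Ideal.span {π})
    (hπr : π ^ r = 0) (hπr' : π ^ (r - 1) ≠ 0) (a : R) (m : ℕ) (h : π ^ m * a = 0) :
    ∃ c, a = π ^ (r - m) * c := by
  rcases le_or_gt r m with hm | hm
  · exact ⟨a, by rw [show r - m = 0 by omega, pow_zero, one_mul]⟩
  rcases eq_or_ne a 0 with rfl | ha
  · exact ⟨0, by rw [mul_zero]⟩
  set S : Set ℕ := {i | ∃ c, a = π ^ i * c} with hS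
  have h0 : 0 ∈ S := ⟨a, by rw [pow_zero, one_mul]⟩
  have hbdd : ∀ i ∈ S, i < r := by
    intro i hi
    by_contra hir
    push_neg at hir
    rcases hi with ⟨c, hc⟩
    apply ha
    rw [hc, show i = r + (i - r) by omega, pow_add, hπr, zero_mul, zero_mul]
  have hbdd' : BddAbove S := ⟨r, fun i hi => (hbdd i hi).le⟩
  have hmem : sSup S ∈ S := Nat.sSup_mem ⟨0, h0⟩ hbdd'
  set i := sSup S with hi
  rcases hmem with ⟨y, hy⟩
  have hyu : IsUnit y := by
    by_contra hyu
    have : y ∈ IsLocalRing.maximalIdeal R := (IsLocalRing.mem_maximalIdeal y).2 hyu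
    rw [hmax, Ideal.mem_span_singleton'] at this
    rcases this with ⟨z, hz⟩
    have : i + 1 ∈ S := ⟨z, by rw [hy, ← hz, pow_succ]; ring⟩
    have := le_csSup hbdd' this
    omega
  have hpow : π ^ (m + i) = 0 := by
    rcases hyu with ⟨u, rfl⟩
    have : π ^ m * a * (↑u⁻¹ : R) = 0 := by rw [h, zero_mul]
    rw [hy] at this
    calc π ^ (m + i) = π ^ m * (π ^ i * ↑u) * ↑u⁻¹ := by
          rw [mul_assoc, mul_assoc, Units.mul_inv, mul_one, ← pow_add]
      _ = 0 := this
  have hri : r ≤ m + i := aux_pow_ne hπr' hpow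
  refine ⟨π ^ (i - (r - m)) * y, ?_⟩
  rw [hy, ← mul_assoc, ← pow_add, show r - m + (i - (r - m)) = i by omega]

lemma aux_ann_mod [IsLocalRing R] {d : ℕ} (b : Module.Basis (Fin d) R V)
    (hmax : IsLocalRing.maximalIdeal R = Ideal.span {π})
    (hπr : π ^ r = 0) (hπr' : π ^ (r - 1) ≠ 0) {m : ℕ} {x : V}
    (h : (π ^ m) • x = 0) :
    x ∈ (π ^ (r - m)) • (⊤ : Submodule R V) := by
  have hco : ∀ i, π ^ m * b.repr x i = 0 := by
    intro i
    have := congrArg (fun v => b.repr v i) h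
    simpa using this
  choose c hc using fun i => aux_ann hmax hπr hπr' (b.repr x i) m (hco i)
  refine aux_mem_smul.2 ⟨∑ i, c i • b i, Submodule.mem_top, ?_⟩
  rw [Finset.smul_sum]
  conv_rhs => rw [← b.sum_repr x]
  refine Finset.sum_congr rfl fun i _ => ?_
  rw [smul_smul, ← hc i]

lemma aux_top_not_le {d : ℕ} (hd : 0 < d) (b : Module.Basis (Fin d) R V) (hr : 1 ≤ r)
    (hπr : π ^ r = 0) (hπr' : π ^ (r - 1) ≠ 0) :
    ¬ (⊤ : Submodule R V) ≤ π • (⊤ : Submodule R V) := by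
  intro hle
  have hmem : b ⟨0, hd⟩ ∈ π • (⊤ : Submodule R V) := hle Submodule.mem_top
  rcases aux_mem_smul.1 hmem with ⟨y, -, hy⟩
  have h1 : π * b.repr y ⟨0, hd⟩ = 1 := by
    have := congrArg (fun v => b.repr v ⟨0, hd⟩) hy
    simpa using this
  apply hπr'
  calc π ^ (r - 1) = π ^ (r - 1) * (π * b.repr y ⟨0, hd⟩) := by rw [h1, mul_one]
    _ = π ^ (r - 1 + 1) * b.repr y ⟨0, hd⟩ := by rw [← mul_assoc, ← pow_succ]
    _ = 0 := by rw [show r - 1 + 1 = r by omega, hπr, zero_mul]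

lemma aux_mExp_spec (U : Submodule R V) :
    mExp π r U ≤ r ∧ U ≤ (π ^ mExp π r U) • (⊤ : Submodule R V) := by
  have h0 : 0 ∈ {m : ℕ | m ≤ r ∧ U ≤ (π ^ m) • (⊤ : Submodule R V)} :=
    ⟨Nat.zero_le r, by rw [pow_zero, one_smul]; exact le_top⟩
  have hb : BddAbove {m : ℕ | m ≤ r ∧ U ≤ (π ^ m) • (⊤ : Submodule R V)} :=
    ⟨r, fun m hm => hm.1⟩
  exact Nat.sSup_mem ⟨0, h0⟩ hb

lemma aux_le_mExp {U : Submodule R V} {m : ℕ} (h1 : m ≤ r)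
    (h2 : U ≤ (π ^ m) • (⊤ : Submodule R V)) : m ≤ mExp π r U :=
  le_csSup ⟨r, fun k hk => hk.1⟩ ⟨h1, h2⟩

lemma aux_mem_tilde {U : Submodule R V} {x : V} :
    x ∈ tilde π r U ↔ (π ^ mExp π r U) • x ∈ U := Iff.rfl

lemma aux_smul_tilde (U : Submodule R V) :
    (π ^ mExp π r U) • tilde π r U = U := by
  apply le_antisymm
  · intro x hx
    rcases aux_mem_smul.1 hx with ⟨s, hs, rfl⟩
    exact aux_mem_tilde.1 hs
  · intro u hu
    have hu' := (aux_mExp_spec (π := π) (r := r) U).2 hu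
    rcases aux_mem_smul.1 hu' with ⟨v, -, rfl⟩
    exact aux_mem_smul.2 ⟨v, aux_mem_tilde.2 hu, rfl⟩

lemma aux_tilde_not_le [IsLocalRing R] {d : ℕ} (hd : 0 < d) (b : Module.Basis (Fin d) R V)
    (hr : 1 ≤ r) (hmax : IsLocalRing.maximalIdeal R = Ideal.span {π})
    (hπr : π ^ r = 0) (hπr' : π ^ (r - 1) ≠ 0) (U : Submodule R V) :
    ¬ tilde π r U ≤ π • (⊤ : Submodule R V) := by
  intro hle
  rcases (aux_mExp_spec (π := π) (r := r) U).1.lt_or_eq with hlt | heq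
  · have hU : U ≤ (π ^ (mExp π r U + 1)) • (⊤ : Submodule R V) := by
      calc U = (π ^ mExp π r U) • tilde π r U := (aux_smul_tilde U).symm
        _ ≤ (π ^ mExp π r U) • (π • (⊤ : Submodule R V)) := aux_smul_le_smul hle
        _ = (π ^ (mExp π r U + 1)) • (⊤ : Submodule R V) := by
            rw [smul_smul, ← pow_succ]
    exact absurd (aux_le_mExp (π := π) (r := r) (by omega) hU) (by omega)
  · have htop : (⊤ : Submodule R V) ≤ tilde π r U := by
      intro x _
      rw [aux_mem_tilde, heq, hπr, zero_smul]
      exact U.zero_mem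
    exact aux_top_not_le hd b hr hπr hπr' (htop.trans hle)

end Aux

section Aux2

variable {R : Type*} [CommRing R] {V : Type*} [AddCommGroup V] [Module R V]
variable {π : R} {r : ℕ}

lemma aux_mExp_tilde [IsLocalRing R] {d : ℕ} (hd : 0 < d) (b : Module.Basis (Fin d) R V)
    (hr : 1 ≤ r) (hmax : IsLocalRing.maximalIdeal R = Ideal.span {π})
    (hπr : π ^ r = 0) (hπr' : π ^ (r - 1) ≠ 0) (U : Submodule R V) :
    mExp π r (tilde π r U) = 0 := by
  by_contra h
  have h1 : 1 ≤ mExp π r (tilde π r U) := by omega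
  have h2 : tilde π r U ≤ π • (⊤ : Submodule R V) := by
    refine le_trans (aux_mExp_spec (π := π) (r := r) (tilde π r U)).2 ?_
    have h3 := aux_pow_smul_le (π := π) (V := V) h1
    rwa [pow_one] at h3
  exact aux_tilde_not_le hd b hr hmax hπr hπr' U h2

lemma aux_nmin_left_top (U : Submodule R V) : nmin π U (⊤ : Submodule R V) = 0 :=
  Nat.sInf_eq_zero.2 (Or.inl (show (π ^ 0) • U ≤ ⊤ from le_top))

lemma aux_nmin_spec (hπr : π ^ r = 0) (W : Submodule R V) :
    nmin π (⊤ : Submodule R V) W ≤ r ∧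
      (π ^ nmin π (⊤ : Submodule R V) W) • (⊤ : Submodule R V) ≤ W := by
  have hr' : r ∈ {m : ℕ | (π ^ m) • (⊤ : Submodule R V) ≤ W} := by
    intro x hx
    rcases aux_mem_smul.1 hx with ⟨s, -, rfl⟩
    rw [hπr, zero_smul]
    exact W.zero_mem
  exact ⟨Nat.sInf_le hr', Nat.sInf_mem ⟨r, hr'⟩⟩

lemma aux_nmin_le {W : Submodule R V} {k : ℕ}
    (h : (π ^ k) • (⊤ : Submodule R V) ≤ W) : nmin π (⊤ : Submodule R V) W ≤ k :=
  Nat.sInf_le h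

lemma aux_mExp_smul [IsLocalRing R] {d : ℕ} (hd : 0 < d) (b : Module.Basis (Fin d) R V)
    (hr : 1 ≤ r) (hmax : IsLocalRing.maximalIdeal R = Ideal.span {π})
    (hπr : π ^ r = 0) (hπr' : π ^ (r - 1) ≠ 0)
    {W : Submodule R V} (hWne : ¬ W ≤ π • (⊤ : Submodule R V))
    {m : ℕ} (hm : m ≤ r) :
    mExp π r ((π ^ m) • W) = m := by
  have h1 : m ≤ mExp π r ((π ^ m) • W) := aux_le_mExp hm aux_smul_le_top
  have h2 := (aux_mExp_spec (π := π) (r := r) ((π ^ m) • W)).2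
  have h3 := (aux_mExp_spec (π := π) (r := r) ((π ^ m) • W)).1
  by_contra hne
  have hk : m + 1 ≤ mExp π r ((π ^ m) • W) := by omega
  obtain ⟨w, hw, hwn⟩ : ∃ w ∈ W, w ∉ π • (⊤ : Submodule R V) := by
    by_contra hc
    push_neg at hc
    exact hWne hc
  have hmem : (π ^ m) • w ∈ (π ^ (m + 1)) • (⊤ : Submodule R V) :=
    (h2.trans (aux_pow_smul_le hk)) (Submodule.smul_mem_pointwise_smul w _ W hw)
  rcases aux_mem_smul.1 hmem with ⟨v, -, hv⟩
  have h0 : (π ^ m) • (w - π • v) = 0 := by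
    rw [smul_sub, smul_smul, ← pow_succ, hv, sub_self]
  have hxw := aux_ann_mod b hmax hπr hπr' h0
  have hle : (π ^ (r - m)) • (⊤ : Submodule R V) ≤ π • (⊤ : Submodule R V) := by
    have h4 := aux_pow_smul_le (π := π) (V := V) (j := 1) (k := r - m) (by omega)
    rwa [pow_one] at h4
  apply hwn
  have hrw : w = (w - π • v) + π • v := by abel
  rw [hrw]
  exact Submodule.add_mem _ (hle hxw) (aux_mem_smul.2 ⟨v, Submodule.mem_top, rfl⟩)

lemma aux_tilde_smul [IsLocalRing R] {d : ℕ} (hd : 0 < d) (b : Module.Basis (Fin d) R V)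
    (hr : 1 ≤ r) (hmax : IsLocalRing.maximalIdeal R = Ideal.span {π})
    (hπr : π ^ r = 0) (hπr' : π ^ (r - 1) ≠ 0)
    {W : Submodule R V} (hWne : ¬ W ≤ π • (⊤ : Submodule R V))
    {m : ℕ} (hm : m ≤ r)
    (hsub : (π ^ (r - m)) • (⊤ : Submodule R V) ≤ W) :
    tilde π r ((π ^ m) • W) = W := by
  ext x
  rw [aux_mem_tilde, aux_mExp_smul hd b hr hmax hπr hπr' hWne hm]
  constructor
  · intro hx
    rcases aux_mem_smul.1 hx with ⟨w, hw, hwx⟩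
    have h0 : (π ^ m) • (x - w) = 0 := by rw [smul_sub, hwx, sub_self]
    have hx' := aux_ann_mod b hmax hπr hπr' h0
    have hrw : x = w + (x - w) := by abel
    rw [hrw]
    exact W.add_mem hw (hsub hx')
  · intro hx
    exact Submodule.smul_mem_pointwise_smul x _ W hx

end Aux2

section Aux3

variable {R : Type*} [CommRing R] {V : Type*} [AddCommGroup V] [Module R V]
variable {π : R} {r : ℕ}

lemma aux_class [IsLocalRing R] {d : ℕ} (hd : 0 < d) (b : Module.Basis (Fin d) R V)
    (hr : 1 ≤ r) (hmax : IsLocalRing.maximalIdeal R = Ideal.span {π})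
    (hπr : π ^ r = 0) (hπr' : π ^ (r - 1) ≠ 0) (U : Submodule R V) :
    {U' : Submodule R V | tilde π r U' = tilde π r U} =
      (fun m => (π ^ m) • tilde π r U) ''
        Set.Iic (r - nmin π (⊤ : Submodule R V) (tilde π r U)) := by
  set W := tilde π r U with hW
  set n := nmin π (⊤ : Submodule R V) W with hn
  have hWne : ¬ W ≤ π • (⊤ : Submodule R V) := aux_tilde_not_le hd b hr hmax hπr hπr' U
  have hnspec := aux_nmin_spec (π := π) hπr W
  ext U'
  simp only [Set.mem_setOf_eq, Set.mem_image, Set.mem_Iic]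
  constructor
  · intro hU'
    refine ⟨mExp π r U', ?_, ?_⟩
    · by_contra hgt
      push_neg at hgt
      have hm' := (aux_mExp_spec (π := π) (r := r) U').1
      have hstep : (π ^ (n - 1)) • (⊤ : Submodule R V) ≤ W := by
        rw [← hU']
        intro x hx
        rcases aux_mem_smul.1 hx with ⟨y, -, rfl⟩
        rw [aux_mem_tilde, smul_smul, ← pow_add]
        have hz : π ^ (mExp π r U' + (n - 1)) = 0 := by
          rw [show mExp π r U' + (n - 1) = r + (mExp π r U' + (n - 1) - r) by omega,
            pow_add, hπr, zero_mul]
        rw [hz, zero_smul]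
        exact U'.zero_mem
      have := aux_nmin_le hstep
      omega
    · rw [← hU', aux_smul_tilde U']
  · rintro ⟨m, hm, rfl⟩
    have h1 : m ≤ r := by omega
    have hsub : (π ^ (r - m)) • (⊤ : Submodule R V) ≤ W :=
      le_trans (aux_pow_smul_le (by omega : n ≤ r - m)) hnspec.2
    exact aux_tilde_smul hd b hr hmax hπr hπr' hWne h1 hsub

lemma aux_card [IsLocalRing R] {d : ℕ} (hd : 0 < d) (b : Module.Basis (Fin d) R V)
    (hr : 1 ≤ r) (hmax : IsLocalRing.maximalIdeal R = Ideal.span {π})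
    (hπr : π ^ r = 0) (hπr' : π ^ (r - 1) ≠ 0) (U : Submodule R V) :
    Nat.card {U' : Submodule R V | tilde π r U' = tilde π r U} =
      r - nmin π (⊤ : Submodule R V) (tilde π r U) + 1 := by
  have hWne : ¬ tilde π r U ≤ π • (⊤ : Submodule R V) :=
    aux_tilde_not_le hd b hr hmax hπr hπr' U
  have hnr := (aux_nmin_spec (π := π) hπr (tilde π r U)).1
  have hinj : Set.InjOn (fun m => (π ^ m) • tilde π r U)
      (Set.Iic (r - nmin π (⊤ : Submodule R V) (tilde π r U))) := by
    intro m₁ hm₁ m₂ hm₂ hEq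
    have e1 := aux_mExp_smul hd b hr hmax hπr hπr' hWne
      (m := m₁) (by simp only [Set.mem_Iic] at hm₁; omega)
    have e2 := aux_mExp_smul hd b hr hmax hπr hπr' hWne
      (m := m₂) (by simp only [Set.mem_Iic] at hm₂; omega)
    simp only at hEq
    rw [← e1, hEq, e2]
  rw [Nat.card_coe_set_eq, aux_class hd b hr hmax hπr hπr' U,
    Set.ncard_image_of_injOn hinj, ← Finset.coe_Iic, Set.ncard_coe_finset, Nat.card_Iic]

end Aux3


/-- Spheres and balls of radius `ℓ` around `[V_r]` consist exactly of the homothety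
classes of cardinality `= r - ℓ + 1`, resp. `≥ r - ℓ + 1`; moreover the boundary
`∂L(V_r)` coincides with the sphere of radius `r`, i.e. with the classes consisting
of exactly one submodule. -/
theorem sphere_ball_card
    {R : Type*} [CommRing R] [Fintype R] [IsLocalRing R]
    {V : Type*} [AddCommGroup V] [Module R V]
    (d r : ℕ) (hd : 2 ≤ d) (hr : 1 ≤ r) (b : Module.Basis (Fin d) R V)
    (π : R) (hmax : IsLocalRing.maximalIdeal R = Ideal.span {π})
    (hπr : π ^ r = 0) (hπr' : π ^ (r - 1) ≠ 0) :
    (∀ ℓ : ℕ, ℓ ≤ r → ∀ U : Submodule R V,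
      (distMod π (tilde π r U) (tilde π r ⊤) = ℓ ↔
        Nat.card {U' : Submodule R V | tilde π r U' = tilde π r U} = r - ℓ + 1) ∧
      (distMod π (tilde π r U) (tilde π r ⊤) ≤ ℓ ↔
        r - ℓ + 1 ≤ Nat.card {U' : Submodule R V | tilde π r U' = tilde π r U})) ∧
    (∀ U : Submodule R V,
      U ∈ boundary π r ↔ tilde π r U = U ∧ distMod π (tilde π r U) (tilde π r ⊤) = r) := by
  have hd0 : 0 < d := by omega
  have htop : tilde π r (⊤ : Submodule R V) = ⊤ := Submodule.comap_top _
  have hDgen : ∀ U : Submodule R V,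
      distMod π (tilde π r U) (tilde π r (⊤ : Submodule R V)) =
        nmin π (⊤ : Submodule R V) (tilde π r U) := by
    intro U
    rw [htop]
    show nmin π (tilde π r U) ⊤ + nmin π ⊤ (tilde π r U) = _
    rw [aux_nmin_left_top, zero_add]
  constructor
  · intro ℓ hℓ U
    have hD := hDgen U
    have hn := (aux_nmin_spec (π := π) hπr (tilde π r U)).1
    have hcard := aux_card hd0 b hr hmax hπr hπr' U
    constructor
    · rw [hD, hcard]
      omega
    · rw [hD, hcard]
      omega
  · intro U
    constructor
    · rintro ⟨h1, h2⟩
      have hm0 : mExp π r U = 0 := by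
        by_contra h
        have h1' : 1 ≤ mExp π r U := by omega
        have h3 := aux_pow_smul_le (π := π) (V := V) h1'
        rw [pow_one] at h3
        exact h2 ((aux_mExp_spec (π := π) (r := r) U).2.trans h3)
      have ht : tilde π r U = U := by
        ext x
        rw [aux_mem_tilde, hm0, pow_zero, one_smul]
      refine ⟨ht, ?_⟩
      rw [hDgen U, ht]
      have hspec := aux_nmin_spec (π := π) hπr U
      by_contra hne
      have hle : nmin π (⊤ : Submodule R V) U ≤ r - 1 := by omega
      exact h1 ((aux_pow_smul_le hle).trans hspec.2)
    · rintro ⟨ht, hdist⟩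
      rw [hDgen U, ht] at hdist
      constructor
      · intro hle
        have := aux_nmin_le hle
        omega
      · intro hle
        rw [← ht] at hle
        exact aux_tilde_not_le hd0 b hr hmax hπr hπr' U hle

end SphericalSubmoduleCodes
end

section
/- For each n ∈ {1,…,d−1}, the number of free R-submodules of V_r of rank n is |Gr(n,V_r)| = binom(d,n)_{q^{-1}} · q^{rn(d−n)}, where binom(a,b)_X = ∏_{i=0}^{b-1} (1−X^{a−i})/(1−X^{b−i}). In particular |Gr(n,V_r)| = |Gr(d−n,V_r)|. -/
open Pointwise

namespace GrassAux

open SphericalSubmoduleCodes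

variable {R : Type*} [CommRing R] [IsLocalRing R]

lemma mem_max_of_pow_mul_eq_zero {π : R} {r s : ℕ} (hs : s < r) (hπ : π ^ (r-1) ≠ 0)
    {x : R} (hx : π ^ s * x = 0) : x ∈ IsLocalRing.maximalIdeal R := by
  rw [IsLocalRing.mem_maximalIdeal, mem_nonunits_iff]
  intro hu
  apply hπ
  have hπs : π ^ s = 0 := by
    obtain ⟨u, rfl⟩ := hu
    have := congrArg (· * (u⁻¹ : Rˣ).1) hx
    simpa [mul_assoc] using this
  have : (r - 1) = s + (r - 1 - s) := by omega
  rw [this, pow_add, hπs, zero_mul]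

/-- componentwise reduction -/
noncomputable def red (N : ℕ) (v : Fin N → R) : Fin N → IsLocalRing.ResidueField R :=
  fun j => IsLocalRing.residue R (v j)

lemma red_sum_smul {N m : ℕ} (a : Fin m → R) (v : Fin m → (Fin N → R)) (j : Fin N) :
    (∑ i, IsLocalRing.residue R (a i) • red N (v i)) j
      = IsLocalRing.residue R ((∑ i, a i • v i) j) := by
  simp [red, Finset.sum_apply, map_sum]

/-- Linear independence over `R` is equivalent to linear independence of the reductions
over the residue field. -/
lemma linearIndependent_iff_red {π : R} {r : ℕ} (hr : 1 ≤ r)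
    (hmax : IsLocalRing.maximalIdeal R = Ideal.span {π})
    (hπr : π ^ r = 0) (hπr' : π ^ (r-1) ≠ 0)
    {N m : ℕ} (v : Fin m → (Fin N → R)) :
    LinearIndependent R v ↔
      LinearIndependent (IsLocalRing.ResidueField R) (fun i => red N (v i)) := by
  rw [Fintype.linearIndependent_iff, Fintype.linearIndependent_iff]
  constructor
  · intro H g hg i
    choose a ha using fun i => IsLocalRing.residue_surjective (R := R) (g i)
    have hmem : ∀ j, (∑ i, a i • v i) j ∈ IsLocalRing.maximalIdeal R := by
      intro j
      rw [← IsLocalRing.residue_eq_zero_iff _]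
      rw [← red_sum_smul]
      simp only [ha]
      rw [hg, Pi.zero_apply]
    have hz : ∑ i, (π ^ (r-1) * a i) • v i = 0 := by
      have : π ^ (r-1) • (∑ i, a i • v i) = 0 := by
        funext j
        rw [Pi.smul_apply, Pi.zero_apply, smul_eq_mul]
        obtain ⟨c, hc⟩ := Ideal.mem_span_singleton'.mp (hmax ▸ hmem j)
        rw [← hc, mul_comm c π, ← mul_assoc, ← pow_succ]
        have : r - 1 + 1 = r := by omega
        rw [this, hπr, zero_mul]
      rw [← this, Finset.smul_sum]
      exact Finset.sum_congr rfl fun i _ => by rw [smul_smul]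
    have hai : ∀ i, π ^ (r-1) * a i = 0 := H _ hz
    rw [← ha i]
    exact (IsLocalRing.residue_eq_zero_iff _).mpr
      (mem_max_of_pow_mul_eq_zero (by omega) hπr' (hai i))
  · intro H a ha i
    have key : ∀ s, s ≤ r → ∀ i, a i ∈ Ideal.span {π ^ s} := by
      intro s
      induction s with
      | zero => intro _ i; simp [Ideal.span_singleton_one]
      | succ s ih =>
        intro hs i
        have hs' : s < r := by omega
        obtain ⟨b, hb⟩ : ∃ b : Fin m → R, ∀ i, b i * π ^ s = a i := by
          have := fun i => Ideal.mem_span_singleton'.mp (ih (by omega) i)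
          exact ⟨fun i => (this i).choose, fun i => (this i).choose_spec⟩
        have hmem : ∀ j, (∑ i, b i • v i) j ∈ IsLocalRing.maximalIdeal R := by
          intro j
          refine mem_max_of_pow_mul_eq_zero hs' hπr' ?_
          have : π ^ s * (∑ i, b i • v i) j = (∑ i, a i • v i) j := by
            simp only [Finset.sum_apply, Pi.smul_apply, smul_eq_mul, Finset.mul_sum]
            refine Finset.sum_congr rfl fun i2 _ => ?_
            rw [← hb i2]; ring
          rw [this, ha, Pi.zero_apply]
        have hres : ∀ i, IsLocalRing.residue R (b i) = 0 := by
          apply H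
          funext j
          have h2 := red_sum_smul b v j
          rw [Pi.zero_apply, ← (IsLocalRing.residue_eq_zero_iff _).mpr (hmem j)]
          exact h2
        have hbi : b i ∈ Ideal.span {π} := by
          rw [← hmax]
          exact (IsLocalRing.residue_eq_zero_iff _).mp (hres i)
        obtain ⟨c, hc⟩ := Ideal.mem_span_singleton'.mp hbi
        refine Ideal.mem_span_singleton'.mpr ⟨c, ?_⟩
        rw [pow_succ, ← mul_assoc, ← hb i, ← hc]; ring
    have := key r le_rfl i
    rw [hπr, Ideal.span_singleton_eq_bot.mpr rfl] at this
    simpa using this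

lemma card_li [Fintype R] {π : R} {r : ℕ} (hr : 1 ≤ r)
    (hmax : IsLocalRing.maximalIdeal R = Ideal.span {π})
    (hπr : π ^ r = 0) (hπr' : π ^ (r-1) ≠ 0) (N m : ℕ) (hm : m ≤ N) :
    Nat.card {v : Fin m → (Fin N → R) // LinearIndependent R v}
      = Nat.card (IsLocalRing.maximalIdeal R) ^ (N * m) *
        ∏ i ∈ Finset.range m,
          (Nat.card (IsLocalRing.ResidueField R) ^ N
            - Nat.card (IsLocalRing.ResidueField R) ^ i) := by
  classical
  set k := IsLocalRing.ResidueField R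
  letI : Finite k := Quotient.finite _
  letI : Fintype k := Fintype.ofFinite _
  set L : k → R := Function.surjInv (IsLocalRing.residue_surjective (R := R)) with hLdef
  have hL : ∀ x : k, IsLocalRing.residue R (L x) = x :=
    fun x => Function.surjInv_eq _ x
  have hredmem : ∀ x : R, x - L (IsLocalRing.residue R x) ∈ IsLocalRing.maximalIdeal R := by
    intro x
    rw [← IsLocalRing.residue_eq_zero_iff _, map_sub, hL, sub_self]
  have hred' : ∀ (w : Fin m → Fin N → k) (ε : Fin m → Fin N → IsLocalRing.maximalIdeal R),
      (fun i => red N (fun j => L (w i j) + (ε i j).1)) = w := by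
    intro w ε
    funext i j
    show IsLocalRing.residue R (L (w i j) + (ε i j).1) = w i j
    rw [map_add, hL, (IsLocalRing.residue_eq_zero_iff _).mpr (ε i j).2, add_zero]
  let e : {v : Fin m → (Fin N → R) // LinearIndependent R v} ≃
      ({w : Fin m → (Fin N → k) // LinearIndependent k w} ×
        (Fin m → Fin N → IsLocalRing.maximalIdeal R)) :=
    { toFun := fun v =>
        ⟨⟨fun i => red N (v.1 i), (linearIndependent_iff_red hr hmax hπr hπr' v.1).mp v.2⟩,
          fun i j => ⟨v.1 i j - L (IsLocalRing.residue R (v.1 i j)), hredmem _⟩⟩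
      invFun := fun p =>
        ⟨fun i j => L (p.1.1 i j) + (p.2 i j).1, by
          rw [linearIndependent_iff_red hr hmax hπr hπr', hred']
          exact p.1.2⟩
      left_inv := fun v => by
        apply Subtype.ext
        funext i j
        show L (IsLocalRing.residue R (v.1 i j)) + (v.1 i j - L _) = v.1 i j
        ring
      right_inv := fun p => by
        refine Prod.ext (Subtype.ext (hred' p.1.1 p.2)) ?_
        funext i j
        apply Subtype.ext
        show L (p.1.1 i j) + (p.2 i j).1 - L (IsLocalRing.residue R (L (p.1.1 i j) + (p.2 i j).1))
          = (p.2 i j).1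
        rw [map_add, hL, (IsLocalRing.residue_eq_zero_iff _).mpr (p.2 i j).2, add_zero]
        ring }
  rw [Nat.card_congr e, Nat.card_prod]
  have h1 : Nat.card {w : Fin m → (Fin N → k) // LinearIndependent k w}
      = ∏ i ∈ Finset.range m, (Nat.card k ^ N - Nat.card k ^ i) := by
    rw [card_linearIndependent (by rw [Module.finrank_pi, Fintype.card_fin]; exact hm)]
    rw [← Fin.prod_univ_eq_prod_range (fun i => Nat.card k ^ N - Nat.card k ^ i) m]
    simp [Module.finrank_pi, Fintype.card_fin, Nat.card_eq_fintype_card]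
  have h2 : Nat.card (Fin m → Fin N → IsLocalRing.maximalIdeal R)
      = Nat.card (IsLocalRing.maximalIdeal R) ^ (N * m) := by
    rw [Nat.card_pi]
    simp only [Nat.card_pi, Finset.prod_const, Finset.card_univ, Fintype.card_fin]
    rw [← pow_mul, mul_comm N m]
  rw [h1, h2, mul_comm]

omit [IsLocalRing R] in
lemma pi_mem_smul_top {N : ℕ} (I : Ideal R) (w : Fin N → R) (hw : ∀ j, w j ∈ I) :
    w ∈ I • (⊤ : Submodule R (Fin N → R)) := by
  rw [pi_eq_sum_univ w]
  exact Submodule.sum_mem _ fun j _ =>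
    Submodule.smul_mem_smul (hw j) Submodule.mem_top

lemma span_eq_top_of_li {π : R} {r : ℕ} (hr : 1 ≤ r)
    (hmax : IsLocalRing.maximalIdeal R = Ideal.span {π})
    (hπr : π ^ r = 0) (hπr' : π ^ (r-1) ≠ 0)
    {n : ℕ} (u : Fin n → (Fin n → R)) (hu : LinearIndependent R u) :
    Submodule.span R (Set.range u) = ⊤ := by
  classical
  set k := IsLocalRing.ResidueField R
  have hk : LinearIndependent k (fun i => red n (u i)) :=
    (linearIndependent_iff_red hr hmax hπr hπr' u).mp hu
  have hspan : Submodule.span k (Set.range fun i => red n (u i)) = ⊤ := by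
    apply Submodule.eq_top_of_finrank_eq
    rw [finrank_span_eq_card hk, Module.finrank_pi]
  refine le_antisymm le_top ?_
  refine Submodule.le_of_le_smul_of_le_jacobson_bot (I := IsLocalRing.maximalIdeal R)
    (Module.Finite.fg_top (R := R) (M := Fin n → R)) ?_ ?_
  · exact (IsLocalRing.jacobson_eq_maximalIdeal ⊥ bot_ne_top).symm.le
  · intro x _
    have hx : red n x ∈ Submodule.span k (Set.range fun i => red n (u i)) := by
      rw [hspan]; exact Submodule.mem_top
    rw [Submodule.mem_span_range_iff_exists_fun] at hx
    obtain ⟨g, hg⟩ := hx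
    choose a ha using fun i => IsLocalRing.residue_surjective (R := R) (g i)
    have hmem : x - ∑ i, a i • u i ∈
        (IsLocalRing.maximalIdeal R) • (⊤ : Submodule R (Fin n → R)) := by
      refine pi_mem_smul_top _ _ fun j => ?_
      rw [← IsLocalRing.residue_eq_zero_iff _]
      have : (∑ i, g i • red n (u i)) j = red n x j := by rw [hg]
      simp only [Finset.sum_apply, Pi.smul_apply] at this
      rw [Pi.sub_apply, map_sub]
      simp only [Finset.sum_apply, Pi.smul_apply, smul_eq_mul, map_sum, map_mul]
      rw [sub_eq_zero]
      calc (IsLocalRing.residue R) (x j) = ∑ i, g i • red n (u i) j := this.symm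
        _ = ∑ i, IsLocalRing.residue R (a i) * IsLocalRing.residue R (u i j) :=
          Finset.sum_congr rfl fun i _ => by rw [← ha i]; rfl
    have hx2 : x = (∑ i, a i • u i) + (x - ∑ i, a i • u i) := by ring
    rw [hx2]
    refine Submodule.add_mem_sup ?_ hmem
    exact Submodule.sum_smul_mem _ _ fun i _ => Submodule.subset_span ⟨i, rfl⟩

lemma card_grass_mul [Fintype R] {π : R} {r : ℕ} (hr : 1 ≤ r)
    (hmax : IsLocalRing.maximalIdeal R = Ideal.span {π})
    (hπr : π ^ r = 0) (hπr' : π ^ (r-1) ≠ 0) (d n : ℕ) :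
    Nat.card (Grass (V := Fin d → R) R n) *
        Nat.card {u : Fin n → (Fin n → R) // LinearIndependent R u}
      = Nat.card {v : Fin n → (Fin d → R) // LinearIndependent R v} := by
  classical
  let F : {v : Fin n → (Fin d → R) // LinearIndependent R v} →
      (Grass (V := Fin d → R) R n) := fun v =>
    ⟨Submodule.span R (Set.range v.1),
      ⟨Module.Free.of_basis (Module.Basis.span v.2),
        by rw [finrank_span_eq_card v.2, Fintype.card_fin]⟩⟩
  have e2 : ∀ U : Grass (V := Fin d → R) R n,
      {x : {v : Fin n → (Fin d → R) // LinearIndependent R v} // F x = U} ≃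
        {u : Fin n → (Fin n → R) // LinearIndependent R u} := by
    intro U
    haveI : Module.Free R U.1 := U.2.1
    let c : Module.Basis (Fin n) R U.1 := (Module.finBasis R U.1).reindex (finCongr U.2.2)
    let eU : U.1 ≃ₗ[R] (Fin n → R) := c.equivFun
    have hmem : ∀ (x : {v : Fin n → (Fin d → R) // LinearIndependent R v}),
        F x = U → ∀ i, x.1 i ∈ U.1 := by
      intro x hx i
      have hsp : Submodule.span R (Set.range x.1) = U.1 := congrArg Subtype.val hx
      exact hsp ▸ Submodule.subset_span ⟨i, rfl⟩
    refine
      { toFun := fun x => ⟨fun i => eU ⟨x.1.1 i, hmem x.1 x.2 i⟩, ?_⟩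
        invFun := fun u => ⟨⟨fun i => (eU.symm (u.1 i)).1, ?_⟩, ?_⟩
        left_inv := ?_
        right_inv := ?_ }
    · have h0 : LinearIndependent R (fun i => (⟨x.1.1 i, hmem x.1 x.2 i⟩ : U.1)) := by
        apply LinearIndependent.of_comp U.1.subtype
        exact x.1.2
      exact h0.map' eU.toLinearMap eU.ker
    · have h0 : LinearIndependent R (fun i => eU.symm (u.1 i)) :=
        u.2.map' eU.symm.toLinearMap eU.symm.ker
      exact h0.map' U.1.subtype U.1.ker_subtype
    · apply Subtype.ext
      show Submodule.span R (Set.range fun i => (U.1.subtype (eU.symm (u.1 i)))) = U.1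
      have h1 : Submodule.span R (Set.range fun i => eU.symm (u.1 i)) = ⊤ := by
        have h2 : Submodule.span R (Set.range u.1) = ⊤ :=
          span_eq_top_of_li hr hmax hπr hπr' u.1 u.2
        have h3 : (Set.range fun i => eU.symm (u.1 i)) = (eU.symm : (Fin n → R) →ₗ[R] U.1) '' (Set.range u.1) := by
          rw [← Set.range_comp]; rfl
        rw [h3, Submodule.span_image, h2, Submodule.map_top]
        simp
      have h4 : (Set.range fun i => U.1.subtype (eU.symm (u.1 i)))
          = U.1.subtype '' (Set.range fun i => eU.symm (u.1 i)) := by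
        rw [← Set.range_comp]; rfl
      rw [h4, Submodule.span_image, h1, Submodule.map_top, Submodule.range_subtype]
    · intro x
      apply Subtype.ext
      apply Subtype.ext
      funext i
      show (eU.symm (eU ⟨x.1.1 i, hmem x.1 x.2 i⟩)).1 = x.1.1 i
      rw [LinearEquiv.symm_apply_apply]
    · intro u
      apply Subtype.ext
      funext i
      show eU ⟨(eU.symm (u.1 i)).1, _⟩ = u.1 i
      rw [show (⟨(eU.symm (u.1 i)).1, _⟩ : U.1) = eU.symm (u.1 i) from rfl,
        LinearEquiv.apply_symm_apply]
  have hc : Nat.card {v : Fin n → (Fin d → R) // LinearIndependent R v}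
      = Nat.card (Grass (V := Fin d → R) R n) *
        Nat.card {u : Fin n → (Fin n → R) // LinearIndependent R u} :=
    calc Nat.card {v : Fin n → (Fin d → R) // LinearIndependent R v}
      = Nat.card (Σ U : Grass (V := Fin d → R) R n, {x // F x = U}) :=
        Nat.card_congr (Equiv.sigmaFiberEquiv F).symm
    _ = Nat.card ((Grass (V := Fin d → R) R n) ×
          {u : Fin n → (Fin n → R) // LinearIndependent R u}) :=
        Nat.card_congr ((Equiv.sigmaCongrRight e2).trans (Equiv.sigmaEquivProd _ _))
    _ = _ := by rw [Nat.card_prod]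
  exact hc.symm

lemma card_R [Fintype R] {π : R} {r : ℕ} (hr : 1 ≤ r)
    (hmax : IsLocalRing.maximalIdeal R = Ideal.span {π})
    (hπr : π ^ r = 0) (hπr' : π ^ (r-1) ≠ 0) :
    Nat.card R = Nat.card (R ⧸ IsLocalRing.maximalIdeal R) ^ r := by
  classical
  set q := Nat.card (R ⧸ IsLocalRing.maximalIdeal R) with hq
  let I : ℕ → Ideal R := fun s => Ideal.span {π ^ s}
  have hle : ∀ s, I (s+1) ≤ I s := fun s =>
    Ideal.span_singleton_le_span_singleton.mpr (pow_dvd_pow π (Nat.le_succ s))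
  have step : ∀ s, s < r → Nat.card (I s) = q * Nat.card (I (s+1)) := by
    intro s hs
    set N : Submodule R (I s) := Submodule.comap (I s).subtype (I (s+1)) with hN
    have hgmem : ∀ x : R, π ^ s * x ∈ I s := fun x =>
      Ideal.mem_span_singleton'.mpr ⟨x, mul_comm _ _⟩
    let g : R →ₗ[R] I s :=
      { toFun := fun x => ⟨π ^ s * x, hgmem x⟩
        map_add' := fun x y => Subtype.ext (mul_add _ _ _)
        map_smul' := fun c x => Subtype.ext (by simp [smul_eq_mul]; ring) }
    let f := N.mkQ.comp g
    have hsurj : Function.Surjective f := by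
      intro y
      obtain ⟨z, rfl⟩ := N.mkQ_surjective y
      obtain ⟨c, hc⟩ := Ideal.mem_span_singleton'.mp z.2
      refine ⟨c, ?_⟩
      show N.mkQ (g c) = N.mkQ z
      congr 1
      apply Subtype.ext
      show π ^ s * c = (z : R)
      rw [mul_comm]; exact hc
    have hker : LinearMap.ker f = IsLocalRing.maximalIdeal R := by
      ext x
      have : f x = 0 ↔ π ^ s * x ∈ I (s+1) := by
        show N.mkQ (g x) = 0 ↔ _
        rw [Submodule.mkQ_apply, Submodule.Quotient.mk_eq_zero]
        rfl
      rw [LinearMap.mem_ker, this]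
      constructor
      · intro h
        obtain ⟨c, hc⟩ := Ideal.mem_span_singleton'.mp h
        have hz : π ^ s * (x - c * π) = 0 := by
          rw [mul_sub, ← hc]; ring
        have h1 : x - c * π ∈ IsLocalRing.maximalIdeal R :=
          mem_max_of_pow_mul_eq_zero hs hπr' hz
        have h2 : c * π ∈ IsLocalRing.maximalIdeal R := by
          rw [hmax]; exact Ideal.mem_span_singleton'.mpr ⟨c, rfl⟩
        simpa using add_mem h1 h2
      · intro h
        rw [hmax] at h
        obtain ⟨c, hc⟩ := Ideal.mem_span_singleton'.mp h
        refine Ideal.mem_span_singleton'.mpr ⟨c, ?_⟩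
        rw [← hc]; ring
    have hquot : q = Nat.card (I s ⧸ N) := by
      rw [hq, ← hker]
      exact Nat.card_congr (f.quotKerEquivOfSurjective hsurj).toEquiv
    have hlag : Nat.card (I s) = Nat.card N * Nat.card (I s ⧸ N) :=
      Submodule.card_eq_card_quotient_mul_card N
    have hN' : Nat.card N = Nat.card (I (s+1)) :=
      Nat.card_congr (Submodule.comapSubtypeEquivOfLe (hle s)).toEquiv
    rw [hlag, hN', ← hquot]
    ring
  have key : ∀ s, s ≤ r → Nat.card R = q ^ s * Nat.card (I s) := by
    intro s
    induction s with
    | zero =>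
      intro _
      have : I 0 = ⊤ := by simp [I, Ideal.span_singleton_one]
      rw [this, pow_zero, one_mul]
      exact (Nat.card_congr (Submodule.topEquiv (R := R) (M := R)).toEquiv).symm
    | succ s ih =>
      intro hs
      rw [ih (by omega), step s (by omega), pow_succ]
      ring
  have hIr : Nat.card (I r) = 1 := by
    have : I r = ⊥ := by simp [I, hπr]
    rw [this]
    exact Nat.card_unique
  rw [key r le_rfl, hIr, mul_one]

omit [IsLocalRing R] in
lemma map_mem_grass {V W : Type*} [AddCommGroup V] [Module R V] [AddCommGroup W] [Module R W]
    (e : V ≃ₗ[R] W) {n : ℕ} (U : Submodule R V) (h : U ∈ Grass (V := V) R n) :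
    U.map (e : V →ₗ[R] W) ∈ Grass (V := W) R n := by
  obtain ⟨h1, h2⟩ := h
  have eq := Submodule.equivMapOfInjective (e : V →ₗ[R] W) e.injective U
  exact ⟨Module.Free.of_equiv eq, by rw [← eq.finrank_eq]; exact h2⟩

omit [IsLocalRing R] in
lemma card_grass_congr {V W : Type*} [AddCommGroup V] [Module R V] [AddCommGroup W] [Module R W]
    (e : V ≃ₗ[R] W) (n : ℕ) :
    Nat.card (Grass (V := V) R n) = Nat.card (Grass (V := W) R n) := by
  apply Nat.card_congr
  have hinv : ∀ U : Submodule R V, (U.map (e : V →ₗ[R] W)).map (e.symm : W →ₗ[R] V) = U := by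
    intro U
    rw [← Submodule.map_comp]
    simp
  have hinv' : ∀ U : Submodule R W, (U.map (e.symm : W →ₗ[R] V)).map (e : V →ₗ[R] W) = U := by
    intro U
    rw [← Submodule.map_comp]
    simp
  exact ⟨fun U => ⟨U.1.map (e : V →ₗ[R] W), map_mem_grass e U.1 U.2⟩,
    fun U => ⟨U.1.map (e.symm : W →ₗ[R] V), map_mem_grass e.symm U.1 U.2⟩,
    fun U => Subtype.ext (hinv U.1), fun U => Subtype.ext (hinv' U.1)⟩


variable {Q : ℚ}

lemma hQ0 (hQ : 2 ≤ Q) : Q ≠ 0 := by positivity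
lemma pow_ne_one (hQ : 2 ≤ Q) {s : ℕ} (hs : 1 ≤ s) : Q ^ s ≠ 1 := by
  have : 2 ≤ Q ^ s := le_trans hQ (le_self_pow₀ (by linarith) (by omega))
  intro h; rw [h] at this; linarith
lemma one_sub_inv_pow_ne (hQ : 2 ≤ Q) {s : ℕ} (hs : 1 ≤ s) : 1 - Q⁻¹ ^ s ≠ 0 := by
  rw [sub_ne_zero]
  intro h
  rw [inv_pow] at h
  exact pow_ne_one hQ hs (by rw [← inv_eq_one, ← h])

/-- the key per-product identity E1' -/
lemma E1 (hQ : 2 ≤ Q) {d n : ℕ} (hnd : n ≤ d) :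
    SphericalSubmoduleCodes.qbinom Q⁻¹ d n * (∏ i ∈ Finset.range n, (Q ^ n - Q ^ i)) * Q ^ (d * n)
      = (∏ i ∈ Finset.range n, (Q ^ d - Q ^ i)) * Q ^ (n * n) := by
  have hq0 : Q ≠ 0 := hQ0 hQ
  have hd : Q ^ (d * n) = ∏ _i ∈ Finset.range n, Q ^ d := by
    rw [Finset.prod_const, Finset.card_range, ← pow_mul]
  have hn : Q ^ (n * n) = ∏ _i ∈ Finset.range n, Q ^ n := by
    rw [Finset.prod_const, Finset.card_range, ← pow_mul]
  rw [SphericalSubmoduleCodes.qbinom, hd, hn, ← Finset.prod_mul_distrib, ← Finset.prod_mul_distrib,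
    ← Finset.prod_mul_distrib]
  refine Finset.prod_congr rfl fun i hi => ?_
  have hi' : i < n := Finset.mem_range.mp hi
  have h1 : (1 - Q⁻¹ ^ (d - i)) * Q ^ d = Q ^ d - Q ^ i := by
    rw [sub_mul, one_mul, inv_pow]
    congr 1
    have hdd : Q ^ d = Q ^ (d - i) * Q ^ i := by rw [← pow_add]; congr 1; omega
    rw [hdd, inv_mul_cancel_left₀ (pow_ne_zero _ hq0)]
  have h2 : (1 - Q⁻¹ ^ (n - i)) * Q ^ n = Q ^ n - Q ^ i := by
    rw [sub_mul, one_mul, inv_pow]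
    congr 1
    have hnn : Q ^ n = Q ^ (n - i) * Q ^ i := by rw [← pow_add]; congr 1; omega
    rw [hnn, inv_mul_cancel_left₀ (pow_ne_zero _ hq0)]
  have h3 : (1 - Q⁻¹ ^ (n - i)) ≠ 0 := one_sub_inv_pow_ne hQ (by omega)
  rw [div_mul_eq_mul_div, div_mul_eq_mul_div, div_eq_iff h3, ← h1, ← h2]
  ring

/-- G m -/
def G (Q : ℚ) (m : ℕ) : ℚ := ∏ j ∈ Finset.range m, (Q ^ (j+1) - 1)

lemma G_pos (hQ : 2 ≤ Q) (m : ℕ) : 0 < G Q m := by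
  refine Finset.prod_pos fun j _ => ?_
  have : 2 ≤ Q ^ (j+1) := le_trans hQ (le_self_pow₀ (by linarith) (by omega))
  linarith

lemma prod_sub_eq (hQ : 2 ≤ Q) (N n : ℕ) (h : n ≤ N) :
    (∏ i ∈ Finset.range n, (Q ^ N - Q ^ i))
      = (∏ i ∈ Finset.range n, Q ^ i) * ∏ i ∈ Finset.range n, (Q ^ (N - i) - 1) := by
  rw [← Finset.prod_mul_distrib]
  refine Finset.prod_congr rfl fun i hi => ?_
  have hi' : i < n := Finset.mem_range.mp hi
  rw [mul_sub, mul_one, ← pow_add]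
  congr 2
  omega

lemma reflect_eq (Q : ℚ) (N n : ℕ) (h : n ≤ N) :
    (∏ i ∈ Finset.range n, (Q ^ (N - i) - 1))
      = ∏ i ∈ Finset.range n, (Q ^ ((N - n) + i + 1) - 1) := by
  rw [← Finset.prod_range_reflect (fun i => Q ^ (N - i) - 1) n]
  refine Finset.prod_congr rfl fun i hi => ?_
  have hi' : i < n := Finset.mem_range.mp hi
  congr 2
  omega

lemma G_split (Q : ℚ) (d n : ℕ) (h : n ≤ d) :
    G Q d = G Q (d - n) * ∏ i ∈ Finset.range n, (Q ^ (d - i) - 1) := by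
  obtain ⟨m, rfl⟩ : ∃ m, d = m + n := ⟨d - n, by omega⟩
  rw [reflect_eq Q (m + n) n h, show (m + n) - n = m by omega]
  show G Q (m + n) = _
  simp only [G]
  rw [Finset.prod_range_add]

/-- E5': the symmetric form. -/
lemma E5 (hQ : 2 ≤ Q) {d n : ℕ} (hnd : n ≤ d) :
    SphericalSubmoduleCodes.qbinom Q⁻¹ d n * (G Q n * G Q (d - n)) * Q ^ (d * n) = G Q d * Q ^ (n * n) := by
  have hq0 : Q ≠ 0 := hQ0 hQ
  have e1 := E1 hQ hnd
  rw [prod_sub_eq hQ n n le_rfl, prod_sub_eq hQ d n hnd] at e1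
  have hP : (∏ i ∈ Finset.range n, Q ^ i) ≠ 0 :=
    Finset.prod_ne_zero_iff.mpr fun i _ => pow_ne_zero _ hq0
  have hGn : (∏ i ∈ Finset.range n, (Q ^ (n - i) - 1)) = G Q n := by
    rw [reflect_eq Q n n le_rfl, G]
    refine Finset.prod_congr rfl fun i hi => ?_
    congr 2
    omega
  rw [hGn] at e1
  -- e1 : SphericalSubmoduleCodes.qbinom * (P * G n) * Q^{dn} = (P * Dn) * Q^{n²}
  have e2 : SphericalSubmoduleCodes.qbinom Q⁻¹ d n * G Q n * Q ^ (d * n)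
      = (∏ i ∈ Finset.range n, (Q ^ (d - i) - 1)) * Q ^ (n * n) := by
    apply mul_left_cancel₀ hP
    calc (∏ i ∈ Finset.range n, Q ^ i) * (SphericalSubmoduleCodes.qbinom Q⁻¹ d n * G Q n * Q ^ (d * n))
        = SphericalSubmoduleCodes.qbinom Q⁻¹ d n * ((∏ i ∈ Finset.range n, Q ^ i) * G Q n) * Q ^ (d * n) := by ring
      _ = (∏ i ∈ Finset.range n, Q ^ i) * (∏ i ∈ Finset.range n, (Q ^ (d - i) - 1)) * Q ^ (n*n) := e1
      _ = _ := by ring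
  calc SphericalSubmoduleCodes.qbinom Q⁻¹ d n * (G Q n * G Q (d - n)) * Q ^ (d * n)
      = (SphericalSubmoduleCodes.qbinom Q⁻¹ d n * G Q n * Q ^ (d * n)) * G Q (d - n) := by ring
    _ = (∏ i ∈ Finset.range n, (Q ^ (d - i) - 1)) * Q ^ (n * n) * G Q (d - n) := by rw [e2]
    _ = (G Q (d - n) * ∏ i ∈ Finset.range n, (Q ^ (d - i) - 1)) * Q ^ (n * n) := by ring
    _ = G Q d * Q ^ (n * n) := by rw [← G_split Q d n hnd]

lemma qbinom_symm (hQ : 2 ≤ Q) {d n : ℕ} (hnd : n ≤ d) :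
    SphericalSubmoduleCodes.qbinom Q⁻¹ d n = SphericalSubmoduleCodes.qbinom Q⁻¹ d (d - n) := by
  have hq0 : Q ≠ 0 := hQ0 hQ
  obtain ⟨m, rfl⟩ : ∃ m, d = n + m := ⟨d - n, by omega⟩
  have h1 := E5 hQ hnd
  have h2 := E5 hQ (Nat.sub_le (n + m) n)
  rw [show (n + m) - n = m by omega] at h1 h2 ⊢
  rw [show (n + m) - m = n by omega] at h2
  have key : SphericalSubmoduleCodes.qbinom Q⁻¹ (n+m) n * (G Q n * G Q m) * Q ^ ((n+m) * n + m * m)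
      = SphericalSubmoduleCodes.qbinom Q⁻¹ (n+m) m * (G Q n * G Q m) * Q ^ ((n+m) * n + m * m) := by
    calc SphericalSubmoduleCodes.qbinom Q⁻¹ (n+m) n * (G Q n * G Q m) * Q ^ ((n+m) * n + m * m)
        = (SphericalSubmoduleCodes.qbinom Q⁻¹ (n+m) n * (G Q n * G Q m) * Q ^ ((n+m) * n)) * Q ^ (m * m) := by
          rw [pow_add]; ring
      _ = G Q (n+m) * Q ^ (n * n) * Q ^ (m * m) := by rw [h1]
      _ = (G Q (n+m) * Q ^ (m * m)) * Q ^ (n * n) := by ring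
      _ = (SphericalSubmoduleCodes.qbinom Q⁻¹ (n+m) m * (G Q m * G Q n) * Q ^ ((n+m) * m)) * Q ^ (n * n) := by rw [h2]
      _ = SphericalSubmoduleCodes.qbinom Q⁻¹ (n+m) m * (G Q n * G Q m) * Q ^ ((n+m) * m + n * n) := by
          rw [pow_add]; ring
      _ = _ := by rw [show (n+m) * m + n * n = (n+m) * n + m * m by ring]
  have hne : (G Q n * G Q m) * Q ^ ((n+m) * n + m * m) ≠ 0 := by
    have := G_pos hQ n
    have := G_pos hQ m
    positivity
  have hGG : G Q n * G Q m ≠ 0 := by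
    have := G_pos hQ n
    have := G_pos hQ m
    positivity
  have k1 := mul_right_cancel₀ (pow_ne_zero ((n+m) * n + m * m) hq0) key
  exact mul_right_cancel₀ hGG k1


lemma formula {R : Type*} [CommRing R] [Fintype R] [IsLocalRing R]
    {V : Type*} [AddCommGroup V] [Module R V]
    (d r : ℕ) (hr : 1 ≤ r) (b : Module.Basis (Fin d) R V)
    (π : R) (hmax : IsLocalRing.maximalIdeal R = Ideal.span {π})
    (hπr : π ^ r = 0) (hπr' : π ^ (r - 1) ≠ 0)
    (q : ℕ) (hq : q = Nat.card (R ⧸ IsLocalRing.maximalIdeal R))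
    (n : ℕ) (hnd : n ≤ d) :
    (Nat.card (Grass (V := V) R n) : ℚ)
      = SphericalSubmoduleCodes.qbinom (q : ℚ)⁻¹ d n * (q : ℚ) ^ (r * n * (d - n)) := by
  classical
  obtain ⟨r', rfl⟩ : ∃ r', r = r' + 1 := ⟨r - 1, by omega⟩
  obtain ⟨m, rfl⟩ : ∃ m, d = n + m := ⟨d - n, by omega⟩
  have hπr'' : π ^ r' ≠ 0 := by
    simpa using hπr'
  have hq2 : 2 ≤ q := by
    letI : Finite (IsLocalRing.ResidueField R) := Quotient.finite _
    have h1 : 1 < Nat.card (IsLocalRing.ResidueField R) :=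
      Finite.one_lt_card_iff_nontrivial.mpr inferInstance
    rw [hq]; exact h1
  have hQ2 : (2:ℚ) ≤ (q:ℚ) := by exact_mod_cast hq2
  have hq0 : (q:ℚ) ≠ 0 := by linarith
  have hcardR : Nat.card R = q ^ (r' + 1) := by
    rw [hq]; exact card_R (by omega) hmax hπr hπr''
  have ht : Nat.card (IsLocalRing.maximalIdeal R) = q ^ r' := by
    have hlag : Nat.card R
        = Nat.card (IsLocalRing.maximalIdeal R) * Nat.card (R ⧸ IsLocalRing.maximalIdeal R) :=
      Submodule.card_eq_card_quotient_mul_card (IsLocalRing.maximalIdeal R)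
    rw [hcardR, ← hq] at hlag
    have h2 : q ^ r' * q = Nat.card (IsLocalRing.maximalIdeal R) * q := by
      rw [← pow_succ]; exact hlag
    exact (Nat.eq_of_mul_eq_mul_right (by omega) h2).symm
  have hgr := card_grass_congr (R := R) b.equivFun n
  have hcount := card_grass_mul (by omega : 1 ≤ r' + 1) hmax hπr hπr'' (n + m) n
  have hLd := card_li (by omega : 1 ≤ r' + 1) hmax hπr hπr'' (n + m) n (by omega)
  have hLn := card_li (by omega : 1 ≤ r' + 1) hmax hπr hπr'' n n le_rfl
  have hkq : Nat.card (IsLocalRing.ResidueField R) = q := hq.symm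
  rw [hLd, hLn, ht, hkq] at hcount
  have hcast : ∀ N : ℕ, n ≤ N → ((∏ i ∈ Finset.range n, (q ^ N - q ^ i) : ℕ) : ℚ)
      = ∏ i ∈ Finset.range n, ((q:ℚ) ^ N - (q:ℚ) ^ i) := by
    intro N hN
    rw [Nat.cast_prod]
    refine Finset.prod_congr rfl fun i hi => ?_
    have hi' : i < n := Finset.mem_range.mp hi
    rw [Nat.cast_sub (Nat.pow_le_pow_right (by omega) (by omega)), Nat.cast_pow, Nat.cast_pow]
  have masterQ : (Nat.card (Grass (V := Fin (n + m) → R) R n) : ℚ) *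
      (((q:ℚ) ^ r') ^ (n * n) * ∏ i ∈ Finset.range n, ((q:ℚ) ^ n - (q:ℚ) ^ i))
      = ((q:ℚ) ^ r') ^ ((n + m) * n)
        * ∏ i ∈ Finset.range n, ((q:ℚ) ^ (n + m) - (q:ℚ) ^ i) := by
    have hcast2 := congrArg (fun t : ℕ => (t : ℚ)) hcount
    simp only [Nat.cast_mul, Nat.cast_pow] at hcast2
    rw [hcast (n + m) (by omega), hcast n le_rfl] at hcast2
    exact hcast2
  rw [hgr]
  have e1 := E1 hQ2 (show n ≤ n + m by omega)
  have hAn0 : (0:ℚ) < ∏ i ∈ Finset.range n, ((q:ℚ) ^ n - (q:ℚ) ^ i) :=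
    Finset.prod_pos fun i hi =>
      sub_pos.mpr (pow_lt_pow_right₀ (by linarith) (Finset.mem_range.mp hi))
  have hZ : (((q:ℚ) ^ r') ^ (n * n) * (∏ i ∈ Finset.range n, ((q:ℚ) ^ n - (q:ℚ) ^ i))
      * (q:ℚ) ^ (n * n)) ≠ 0 :=
    mul_ne_zero (mul_ne_zero (pow_ne_zero _ (pow_ne_zero _ hq0)) hAn0.ne') (pow_ne_zero _ hq0)
  apply mul_right_cancel₀ hZ
  have hnm : (n + m) - n = m := by omega
  rw [hnm]
  calc (Nat.card (Grass (V := Fin (n + m) → R) R n) : ℚ) *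
        (((q:ℚ) ^ r') ^ (n * n) * (∏ i ∈ Finset.range n, ((q:ℚ) ^ n - (q:ℚ) ^ i))
          * (q:ℚ) ^ (n * n))
      = ((Nat.card (Grass (V := Fin (n + m) → R) R n) : ℚ) *
          (((q:ℚ) ^ r') ^ (n * n) * ∏ i ∈ Finset.range n, ((q:ℚ) ^ n - (q:ℚ) ^ i)))
          * (q:ℚ) ^ (n * n) := by ring
    _ = (((q:ℚ) ^ r') ^ ((n + m) * n)
          * ∏ i ∈ Finset.range n, ((q:ℚ) ^ (n + m) - (q:ℚ) ^ i)) * (q:ℚ) ^ (n * n) := by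
        rw [masterQ]
    _ = ((∏ i ∈ Finset.range n, ((q:ℚ) ^ (n + m) - (q:ℚ) ^ i)) * (q:ℚ) ^ (n * n))
          * ((q:ℚ) ^ r') ^ ((n + m) * n) := by ring
    _ = (SphericalSubmoduleCodes.qbinom (q:ℚ)⁻¹ (n + m) n
          * (∏ i ∈ Finset.range n, ((q:ℚ) ^ n - (q:ℚ) ^ i)) * (q:ℚ) ^ ((n + m) * n))
          * ((q:ℚ) ^ r') ^ ((n + m) * n) := by rw [e1]
    _ = SphericalSubmoduleCodes.qbinom (q:ℚ)⁻¹ (n + m) n * (q:ℚ) ^ ((r' + 1) * n * m) *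
          (((q:ℚ) ^ r') ^ (n * n) * (∏ i ∈ Finset.range n, ((q:ℚ) ^ n - (q:ℚ) ^ i))
            * (q:ℚ) ^ (n * n)) := by ring

end GrassAux

namespace SphericalSubmoduleCodes

/-- `|Gr(n,V_r)| = binom(d,n)_{q⁻¹} · q^{r n (d-n)}`, and in particular
`|Gr(n,V_r)| = |Gr(d-n,V_r)|`. -/
theorem card_grassmannian
    {R : Type*} [CommRing R] [Fintype R] [IsLocalRing R]
    {V : Type*} [AddCommGroup V] [Module R V]
    (d r : ℕ) (hd : 2 ≤ d) (hr : 1 ≤ r) (b : Module.Basis (Fin d) R V)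
    (π : R) (hmax : IsLocalRing.maximalIdeal R = Ideal.span {π})
    (hπr : π ^ r = 0) (hπr' : π ^ (r - 1) ≠ 0)
    (q : ℕ) (hq : q = Nat.card (R ⧸ IsLocalRing.maximalIdeal R))
    (n : ℕ) (hn : 1 ≤ n) (hnd : n ≤ d - 1) :
    (Nat.card (Grass (V := V) R n) : ℚ) =
      qbinom (q : ℚ)⁻¹ d n * (q : ℚ) ^ (r * n * (d - n)) ∧
    Nat.card (Grass (V := V) R n) = Nat.card (Grass (V := V) R (d - n)) := by
  constructor
  · exact GrassAux.formula d r hr b π hmax hπr hπr' q hq n (by omega)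
  · have hq2 : 2 ≤ q := by
      letI : Finite (IsLocalRing.ResidueField R) := Quotient.finite _
      have h1 : 1 < Nat.card (IsLocalRing.ResidueField R) :=
        Finite.one_lt_card_iff_nontrivial.mpr inferInstance
      rw [hq]; exact h1
    have hQ2 : (2:ℚ) ≤ (q:ℚ) := by exact_mod_cast hq2
    have f1 := GrassAux.formula d r hr b π hmax hπr hπr' q hq n (by omega)
    have f2 := GrassAux.formula d r hr b π hmax hπr hπr' q hq (d - n) (by omega)
    rw [show d - (d - n) = n by omega] at f2
    have hsym := GrassAux.qbinom_symm hQ2 (show n ≤ d by omega)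
    have hcast : (Nat.card (Grass (V := V) R n) : ℚ)
        = (Nat.card (Grass (V := V) R (d - n)) : ℚ) := by
      rw [f1, f2, hsym, show r * (d - n) * n = r * n * (d - n) by ring]
    exact_mod_cast hcast


end SphericalSubmoduleCodes
end

section
/- Let C be a spherical code in V_r with dist(C) = 2r. Then there exists a spherical code C′ in V_r such that: (1) |C′| = |C| and dist(C′) = 2r; (2) every U ∈ C′ satisfies πU = U ∩ πV_r (i.e. every element of C′ is a free R-submodule of V_r). -/
open Pointwise

namespace SphericalSubmoduleCodes

variable {R : Type*} [CommRing R] {V : Type*} [AddCommGroup V] [Module R V]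

lemma mem_psmul {a : R} {S : Submodule R V} {x : V} :
    x ∈ a • S ↔ ∃ y ∈ S, a • y = x := by
  constructor
  · intro h
    rw [← SetLike.mem_coe, Submodule.coe_pointwise_smul] at h
    exact h
  · rintro ⟨y, hy, rfl⟩
    exact Submodule.smul_mem_pointwise_smul y a S hy

lemma psmul_le_self (a : R) (S : Submodule R V) : a • S ≤ S := by
  intro x hx
  rcases mem_psmul.1 hx with ⟨y, hy, rfl⟩
  exact S.smul_mem a hy

lemma psmul_mono (a : R) {S T : Submodule R V} (h : S ≤ T) : a • S ≤ a • T := by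
  intro x hx
  rcases mem_psmul.1 hx with ⟨y, hy, rfl⟩
  exact Submodule.smul_mem_pointwise_smul y a T (h hy)

/-- if `u ∉ πV` then `π^{r-1} u ≠ 0`. -/
lemma smul_ne_zero_of_not_mem
    {R : Type*} [CommRing R] [IsLocalRing R]
    {V : Type*} [AddCommGroup V] [Module R V]
    {d r : ℕ} (b : Module.Basis (Fin d) R V)
    {π : R} (hmax : IsLocalRing.maximalIdeal R = Ideal.span {π})
    (hπr' : π ^ (r - 1) ≠ 0)
    {u : V} (hu : u ∉ π • (⊤ : Submodule R V)) : π ^ (r - 1) • u ≠ 0 := by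
  intro h0
  -- if all coordinates of u are in (π), then u ∈ π • ⊤
  by_cases hco : ∀ i, b.repr u i ∈ Ideal.span ({π} : Set R)
  · apply hu
    have : ∀ i, ∃ e : R, b.repr u i = π * e := by
      intro i
      rcases (Ideal.mem_span_singleton).1 (hco i) with ⟨e, he⟩
      exact ⟨e, he⟩
    choose e he using this
    have : u = π • (∑ i, e i • b i) := by
      conv_lhs => rw [← b.sum_repr u]
      rw [Finset.smul_sum]
      refine Finset.sum_congr rfl fun i _ => ?_
      rw [he i, mul_smul]
    rw [this]
    exact Submodule.smul_mem_pointwise_smul _ π ⊤ trivial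
  · push_neg at hco
    obtain ⟨i, hi⟩ := hco
    have hunit : IsUnit (b.repr u i) := by
      by_contra hnu
      exact hi (hmax ▸ (IsLocalRing.mem_maximalIdeal _).2 hnu)
    have hmul : π ^ (r - 1) * b.repr u i = 0 := by
      have : b.repr (π ^ (r - 1) • u) i = π ^ (r - 1) * b.repr u i := by
        simp [map_smul, smul_eq_mul]
      rw [h0] at this
      simpa using this.symm
    rcases hunit with ⟨w, hw⟩
    apply hπr'
    calc π ^ (r - 1) = π ^ (r - 1) * ↑w * ↑w⁻¹ := by
          rw [mul_assoc, Units.mul_inv, mul_one]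
      _ = 0 := by rw [hw, hmul, zero_mul]

/-- key construction: a "free core" of `U`. -/
lemma exists_core
    {R : Type*} [CommRing R] [Fintype R] [IsLocalRing R]
    {V : Type*} [AddCommGroup V] [Module R V]
    {d r : ℕ} (hr : 1 ≤ r) (b : Module.Basis (Fin d) R V)
    {π : R} (hmax : IsLocalRing.maximalIdeal R = Ideal.span {π})
    (hπr : π ^ r = 0)
    (U : Submodule R V) :
    ∃ F : Submodule R V, F ≤ U ∧ (π ^ (r - 1)) • F = (π ^ (r - 1)) • U ∧
      π • F = F ⊓ π • (⊤ : Submodule R V) := by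
  classical
  haveI : Fintype V := Fintype.ofEquiv (Fin d → R) b.equivFun.toEquiv.symm
  set q : R := π ^ (r - 1) with hq
  set S : Submodule R V := q • U with hS
  have hqπ : π * q = 0 := by
    have h1 : r - 1 + 1 = r := by omega
    rw [hq, ← pow_succ', h1]
    exact hπr
  set P : Set ℕ :=
    {n | ∃ t : Finset V, t.card = n ∧ ↑t ⊆ (S : Set V) ∧ Submodule.span R (↑t : Set V) = S} with hP
  have hPne : P.Nonempty := by
    refine ⟨(S : Set V).toFinset.card, (S : Set V).toFinset, rfl, by simp, by
      simp [Submodule.span_eq]⟩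
  obtain ⟨t, htc, htS, htspan⟩ : sInf P ∈ P := Nat.sInf_mem hPne
  -- lift each generator to U
  have hlift : ∀ g ∈ (S : Set V), ∃ x, x ∈ U ∧ q • x = g := by
    intro g hg
    rcases mem_psmul.1 hg with ⟨y, hy, hyy⟩
    exact ⟨y, hy, hyy⟩
  set xl : V → V := fun g => if h : g ∈ (S : Set V) then (hlift g h).choose else 0 with hxl
  have hxlU : ∀ g ∈ (S : Set V), xl g ∈ U := by
    intro g hg; rw [hxl]; simp only [hg, dif_pos]; exact (hlift g hg).choose_spec.1
  have hxlq : ∀ g ∈ (S : Set V), q • xl g = g := by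
    intro g hg; rw [hxl]; simp only [hg, dif_pos]; exact (hlift g hg).choose_spec.2
  have hxlinj : Set.InjOn xl ↑t := by
    intro g₁ h1 g₂ h2 he
    rw [← hxlq g₁ (htS h1), ← hxlq g₂ (htS h2), he]
  set T : Finset V := t.image xl with hT
  refine ⟨Submodule.span R (↑T : Set V), ?_, ?_, ?_⟩
  · -- F ≤ U
    rw [Submodule.span_le]
    intro y hy
    rcases Finset.mem_image.1 (by exact_mod_cast hy) with ⟨g, hg, rfl⟩
    exact hxlU g (htS hg)
  · -- q • F = q • U
    rw [Submodule.smul_span]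
    have : q • (↑T : Set V) = (↑t : Set V) := by
      rw [hT, Finset.coe_image, ← Set.image_smul, Set.image_image]
      have : ∀ g ∈ (↑t : Set V), q • xl g = g := fun g hg => hxlq g (htS hg)
      calc (fun g => q • xl g) '' ↑t = id '' ↑t := Set.image_congr this
        _ = ↑t := Set.image_id _
    rw [this, htspan]
  · -- π • F = F ⊓ π • ⊤
    apply le_antisymm
    · intro x hx
      rcases mem_psmul.1 hx with ⟨y, hy, rfl⟩
      exact ⟨Submodule.smul_mem _ π hy, Submodule.smul_mem_pointwise_smul y π ⊤ trivial⟩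
    · rintro x ⟨hxF, hxπ⟩
      obtain ⟨f, -, hf⟩ := Submodule.mem_span_finset.1 hxF
      -- rewrite as sum over t
      have hsum : ∑ g ∈ t, f (xl g) • xl g = x := by
        rw [← hf, hT, Finset.sum_image (fun g hg g' hg' => hxlinj (by simpa using hg) (by simpa using hg'))]
      -- q • x = 0
      have hqx : q • x = 0 := by
        rcases mem_psmul.1 hxπ with ⟨v, _, rfl⟩
        rw [smul_smul, mul_comm, hqπ, zero_smul]
      have hzero : ∑ g ∈ t, f (xl g) • g = 0 := by
        have := congrArg (fun z => q • z) hsum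
        simp only [Finset.smul_sum] at this
        rw [hqx] at this
        calc ∑ g ∈ t, f (xl g) • g = ∑ g ∈ t, q • f (xl g) • xl g := by
              refine Finset.sum_congr rfl fun g hg => ?_
              rw [smul_comm, hxlq g (htS hg)]
          _ = 0 := this
      -- all coefficients are in (π)
      have hcoef : ∀ g ∈ t, f (xl g) ∈ Ideal.span ({π} : Set R) := by
        intro g₀ hg₀
        by_contra hng
        have hunit : IsUnit (f (xl g₀)) := by
          by_contra hnu
          exact hng (hmax ▸ (IsLocalRing.mem_maximalIdeal _).2 hnu)
        rcases hunit with ⟨w, hw⟩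
        -- g₀ ∈ span (t.erase g₀)
        have hg0span : g₀ ∈ Submodule.span R (↑(t.erase g₀) : Set V) := by
          have hsplit : f (xl g₀) • g₀ + ∑ g ∈ t.erase g₀, f (xl g) • g = 0 := by
            rw [← Finset.add_sum_erase t _ hg₀] at hzero
            exact hzero
          have hmem : ∑ g ∈ t.erase g₀, f (xl g) • g ∈
              Submodule.span R (↑(t.erase g₀) : Set V) :=
            Submodule.sum_mem _ fun g hg =>
              Submodule.smul_mem _ _ (Submodule.subset_span (by exact_mod_cast hg))
          have hneg : f (xl g₀) • g₀ = -∑ g ∈ t.erase g₀, f (xl g) • g := by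
            linear_combination (norm := abel) hsplit
          have hmem2 : f (xl g₀) • g₀ ∈ Submodule.span R (↑(t.erase g₀) : Set V) := by
            rw [hneg]; exact Submodule.neg_mem _ hmem
          have h3 := Submodule.smul_mem _ (↑w⁻¹ : R) hmem2
          rw [smul_smul, ← hw, Units.inv_mul, one_smul] at h3
          exact h3
        -- smaller generating set, contradiction
        have hspan' : Submodule.span R (↑(t.erase g₀) : Set V) = S := by
          apply le_antisymm
          · rw [Submodule.span_le]
            exact fun y hy => htS (Finset.erase_subset _ _ (by exact_mod_cast hy))
          · rw [← htspan, Submodule.span_le]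
            intro y hy
            rcases eq_or_ne y g₀ with rfl | hne
            · exact hg0span
            · exact Submodule.subset_span
                (by exact_mod_cast Finset.mem_erase.2 ⟨hne, by exact_mod_cast hy⟩)
        have hlt : (t.erase g₀).card < sInf P := htc ▸ Finset.card_erase_lt_of_mem hg₀
        have : sInf P ≤ (t.erase g₀).card :=
          Nat.sInf_le ⟨t.erase g₀, rfl, fun y hy =>
            htS (Finset.erase_subset _ _ (by exact_mod_cast hy)), hspan'⟩
        omega
      -- write x = π • w
      have : ∀ g ∈ t, ∃ e : R, f (xl g) = π * e := by
        intro g hg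
        rcases Ideal.mem_span_singleton.1 (hcoef g hg) with ⟨e, he⟩
        exact ⟨e, he⟩
      choose e he using this
      have hxw : x = π • ∑ g ∈ t.attach, e g g.2 • xl g := by
        rw [Finset.smul_sum, ← hsum, ← Finset.sum_attach t (fun g => f (xl g) • xl g)]
        refine Finset.sum_congr rfl fun g _ => ?_
        rw [smul_smul, ← he g g.2]
      rw [hxw]
      apply Submodule.smul_mem_pointwise_smul
      exact Submodule.sum_mem _ fun g _ =>
        Submodule.smul_mem _ _ (Submodule.subset_span
          (by exact_mod_cast Finset.mem_image_of_mem xl g.2))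

lemma psmul_zero_le {π : R} {r : ℕ} (hπr : π ^ r = 0) (U₁ U₂ : Submodule R V) :
    (π ^ r) • U₁ ≤ U₂ := by
  intro x hx
  rcases mem_psmul.1 hx with ⟨y, _, rfl⟩
  rw [hπr, zero_smul]
  exact zero_mem _

lemma nmin_le_r {π : R} {r : ℕ} (hπr : π ^ r = 0) (U₁ U₂ : Submodule R V) :
    nmin π U₁ U₂ ≤ r :=
  Nat.sInf_le (psmul_zero_le hπr U₁ U₂)

lemma nmin_ge_r {π : R} {r : ℕ} (hr : 1 ≤ r) (hπr : π ^ r = 0) {U₁ U₂ : Submodule R V}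
    (hsep : ¬ ((π ^ (r - 1)) • U₁ ≤ U₂)) : r ≤ nmin π U₁ U₂ := by
  apply le_csInf ⟨r, psmul_zero_le hπr U₁ U₂⟩
  intro m hm
  by_contra hlt
  push_neg at hlt
  apply hsep
  have h1 : r - 1 = (r - 1 - m) + m := by omega
  have h2 : (π ^ (r - 1)) = π ^ (r - 1 - m) * π ^ m := by
    rw [← pow_add, ← h1]
  calc (π ^ (r - 1)) • U₁ = (π ^ (r - 1 - m)) • (π ^ m) • U₁ := by
        rw [h2, mul_smul]
    _ ≤ (π ^ (r - 1 - m)) • U₂ := psmul_mono _ hm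
    _ ≤ U₂ := psmul_le_self _ _

end SphericalSubmoduleCodes

namespace SphericalSubmoduleCodes

/-- Every spherical code `C` in `V_r` with `dist(C) = 2r` can be replaced by a spherical
code `C'` of the same cardinality and minimum distance `2r` all of whose elements `U`
satisfy `πU = U ∩ πV_r` (i.e. are free `R`-submodules of `V_r`). -/
theorem exists_free_code
    {R : Type*} [CommRing R] [Fintype R] [IsLocalRing R]
    {V : Type*} [AddCommGroup V] [Module R V]
    (d r : ℕ) (hd : 2 ≤ d) (hr : 1 ≤ r) (b : Module.Basis (Fin d) R V)
    (π : R) (hmax : IsLocalRing.maximalIdeal R = Ideal.span {π})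
    (hπr : π ^ r = 0) (hπr' : π ^ (r - 1) ≠ 0)
    (C : Set (Submodule R V)) (hC : C ⊆ boundary π r) (hC2 : C.Nontrivial)
    (hdist : minDist π C = 2 * r) :
    ∃ C' : Set (Submodule R V), C' ⊆ boundary π r ∧ C'.Nontrivial ∧
      Nat.card C' = Nat.card C ∧ minDist π C' = 2 * r ∧
      ∀ U ∈ C', π • U = U ⊓ (π • (⊤ : Submodule R V)) := by
  classical
  -- separation: every distinct pair of codewords is far apart
  have hsep : ∀ U₁ ∈ C, ∀ U₂ ∈ C, U₁ ≠ U₂ → ¬ ((π ^ (r - 1)) • U₁ ≤ U₂) := by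
    intro U₁ h₁ U₂ h₂ hne hle
    have hmem : distMod π U₁ U₂ ∈
        {n : ℕ | ∃ W₁ ∈ C, ∃ W₂ ∈ C, W₁ ≠ W₂ ∧ distMod π W₁ W₂ = n} :=
      ⟨U₁, h₁, U₂, h₂, hne, rfl⟩
    have hge : 2 * r ≤ distMod π U₁ U₂ := hdist ▸ Nat.sInf_le hmem
    have h1 : nmin π U₁ U₂ ≤ r - 1 := Nat.sInf_le hle
    have h2 : nmin π U₂ U₁ ≤ r := nmin_le_r hπr U₂ U₁
    have : distMod π U₁ U₂ ≤ (r - 1) + r := add_le_add h1 h2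
    omega
  -- the core map
  set Φ : Submodule R V → Submodule R V :=
    fun U => (exists_core hr b hmax hπr U).choose with hΦ
  have hΦle : ∀ U, Φ U ≤ U := fun U => (exists_core hr b hmax hπr U).choose_spec.1
  have hΦq : ∀ U : Submodule R V, (π ^ (r - 1)) • Φ U = (π ^ (r - 1)) • U :=
    fun U => (exists_core hr b hmax hπr U).choose_spec.2.1
  have hΦfree : ∀ U : Submodule R V, π • Φ U = Φ U ⊓ π • (⊤ : Submodule R V) :=
    fun U => (exists_core hr b hmax hπr U).choose_spec.2.2
  -- separation for cores
  have hsepF : ∀ U₁ ∈ C, ∀ U₂ ∈ C, U₁ ≠ U₂ → ¬ ((π ^ (r - 1)) • Φ U₁ ≤ Φ U₂) := by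
    intro U₁ h₁ U₂ h₂ hne hle
    exact hsep U₁ h₁ U₂ h₂ hne (by rw [← hΦq U₁]; exact hle.trans (hΦle U₂))
  have hinj : Set.InjOn Φ C := by
    intro U₁ h₁ U₂ h₂ he
    by_contra hne
    exact hsepF U₁ h₁ U₂ h₂ hne (he ▸ psmul_le_self _ _)
  refine ⟨Φ '' C, ?_, ?_, Nat.card_image_of_injOn hinj, ?_, ?_⟩
  · -- boundary
    rintro _ ⟨U, hU, rfl⟩
    obtain ⟨hb1, hb2⟩ := hC hU
    constructor
    · exact fun hle => hb1 (hle.trans (hΦle U))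
    · intro hle
      rcases SetLike.not_le_iff_exists.1 hb2 with ⟨u, huU, huπ⟩
      apply smul_ne_zero_of_not_mem (r := r) b hmax hπr' huπ
      have h1 : (π ^ (r - 1)) • u ∈ (π ^ (r - 1)) • Φ U := by
        rw [hΦq U]
        exact Submodule.smul_mem_pointwise_smul u _ U huU
      have h2 : (π ^ (r - 1)) • Φ U ≤ (π ^ (r - 1)) • (π • (⊤ : Submodule R V)) :=
        psmul_mono _ hle
      rcases mem_psmul.1 (h2 h1) with ⟨y, hy, hyy⟩
      rcases mem_psmul.1 hy with ⟨v, _, rfl⟩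
      have hrr : r - 1 + 1 = r := by omega
      rw [← hyy, smul_smul, ← pow_succ, hrr, hπr, zero_smul]
  · -- nontrivial
    obtain ⟨U₁, h₁, U₂, h₂, hne⟩ := hC2
    exact ⟨Φ U₁, ⟨U₁, h₁, rfl⟩, Φ U₂, ⟨U₂, h₂, rfl⟩, fun he => hne (hinj h₁ h₂ he)⟩
  · -- minimum distance
    have hpair : ∀ U₁ ∈ C, ∀ U₂ ∈ C, U₁ ≠ U₂ → distMod π (Φ U₁) (Φ U₂) = 2 * r := by
      intro U₁ h₁ U₂ h₂ hne
      have e1 : nmin π (Φ U₁) (Φ U₂) = r :=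
        le_antisymm (nmin_le_r hπr _ _) (nmin_ge_r hr hπr (hsepF U₁ h₁ U₂ h₂ hne))
      have e2 : nmin π (Φ U₂) (Φ U₁) = r :=
        le_antisymm (nmin_le_r hπr _ _) (nmin_ge_r hr hπr (hsepF U₂ h₂ U₁ h₁ hne.symm))
      rw [distMod, e1, e2]; omega
    obtain ⟨U₁, h₁, U₂, h₂, hne⟩ := hC2
    have hmem2r : 2 * r ∈ {n : ℕ | ∃ W₁ ∈ Φ '' C, ∃ W₂ ∈ Φ '' C, W₁ ≠ W₂ ∧ distMod π W₁ W₂ = n} :=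
      ⟨Φ U₁, ⟨U₁, h₁, rfl⟩, Φ U₂, ⟨U₂, h₂, rfl⟩,
        fun he => hne (hinj h₁ h₂ he), hpair U₁ h₁ U₂ h₂ hne⟩
    apply le_antisymm
    · exact Nat.sInf_le hmem2r
    · apply le_csInf ⟨2 * r, hmem2r⟩
      rintro n ⟨W₁', hW₁', W₂', hW₂', hneW, rfl⟩
      obtain ⟨W₁, hW₁, rfl⟩ := hW₁'
      obtain ⟨W₂, hW₂, rfl⟩ := hW₂'
      have hWne : W₁ ≠ W₂ := fun he => hneW (by rw [he])
      exact (hpair W₁ hW₁ W₂ hW₂ hWne).ge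
  · -- the freeness condition
    rintro _ ⟨U, _, rfl⟩
    exact hΦfree U

end SphericalSubmoduleCodes
end

section
/- Assume d = 2 and let 1 ≤ α ≤ r be an integer. Then card(2;R;2α) = (q+1)q^{r−α}; that is, the maximal cardinality of a spherical code in V_r of minimum distance at least 2α equals (q+1)q^{r−α}. -/
open Pointwise

namespace SphericalSubmoduleCodes

set_option linter.unusedSectionVars false
set_option linter.unusedVariables false
section ChainAux

variable {R : Type*} [CommRing R]

lemma chain_pow_eq_zero_iff {π : R} {r : ℕ} (hπr : π ^ r = 0) (hπr' : π ^ (r-1) ≠ 0) (k : ℕ) :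
    π ^ k = 0 ↔ r ≤ k := by
  constructor
  · intro h
    by_contra hk
    push_neg at hk
    have : π ^ (r-1) = π ^ k * π ^ (r-1-k) := by rw [← pow_add]; congr 1; omega
    rw [this, h, zero_mul] at hπr'
    exact hπr' rfl
  · intro h
    have : π ^ k = π ^ r * π ^ (k - r) := by rw [← pow_add]; congr 1; omega
    rw [this, hπr, zero_mul]

lemma chain_not_isUnit_pi {π : R} {r : ℕ} (hπr : π ^ r = 0) (hπr' : π ^ (r-1) ≠ 0) :
    ¬ IsUnit π := by
  intro h
  have : Nontrivial R := nontrivial_of_ne (π ^ (r-1)) 0 hπr'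
  exact (h.pow r).ne_zero hπr

variable [IsLocalRing R]

lemma chain_pi_dvd {π : R} (hmax : IsLocalRing.maximalIdeal R = Ideal.span {π})
    {a : R} (ha : ¬ IsUnit a) : π ∣ a := by
  have : a ∈ IsLocalRing.maximalIdeal R := ha
  rw [hmax, Ideal.mem_span_singleton] at this
  exact this

lemma chain_exists_unit_pow {π : R} {r : ℕ}
    (hmax : IsLocalRing.maximalIdeal R = Ideal.span {π})
    (hπr : π ^ r = 0) (hπr' : π ^ (r-1) ≠ 0) (a : R) :
    ∃ k ≤ r, ∃ u : R, IsUnit u ∧ a = u * π ^ k := by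
  by_cases h0 : a = 0
  · exact ⟨r, le_rfl, 1, isUnit_one, by rw [h0, hπr, mul_zero]⟩
  classical
  set P : ℕ → Prop := fun k => π ^ k ∣ a with hP
  have hP0 : P 0 := ⟨a, by rw [pow_zero, one_mul]⟩
  set k := Nat.findGreatest P r with hk
  have hPk : P k := Nat.findGreatest_spec (Nat.zero_le r) hP0
  have hkr : k ≤ r := Nat.findGreatest_le r
  have hklt : k < r := by
    rcases lt_or_eq_of_le hkr with h | h
    · exact h
    · exfalso; rw [h] at hPk
      obtain ⟨c, hc⟩ := hPk
      rw [hπr, zero_mul] at hc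
      exact h0 hc
  obtain ⟨b, hb⟩ := hPk
  have hbu : IsUnit b := by
    by_contra hbu
    obtain ⟨c, hc⟩ := chain_pi_dvd hmax hbu
    have : P (k+1) := ⟨c, by rw [hb, hc, pow_succ, mul_assoc]⟩
    exact Nat.findGreatest_is_greatest (Nat.lt_succ_self k) (by omega) this
  exact ⟨k, hkr, b, hbu, by rw [hb, mul_comm]⟩

lemma chain_pow_mul_eq_zero_iff {π : R} {r : ℕ}
    (hmax : IsLocalRing.maximalIdeal R = Ideal.span {π})
    (hπr : π ^ r = 0) (hπr' : π ^ (r-1) ≠ 0) {j : ℕ} (hj : j ≤ r) (a : R) :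
    π ^ j * a = 0 ↔ π ^ (r - j) ∣ a := by
  constructor
  · intro h
    obtain ⟨k, hk, u, hu, rfl⟩ := chain_exists_unit_pow hmax hπr hπr' a
    have h2 : u * π ^ (j + k) = 0 := by rw [pow_add]; ring_nf; ring_nf at h; linear_combination h
    have h3 : π ^ (j + k) = 0 := by
      obtain ⟨v, hv⟩ := hu.exists_left_inv
      calc π ^ (j+k) = v * (u * π ^ (j+k)) := by rw [← mul_assoc, hv, one_mul]
      _ = 0 := by rw [h2, mul_zero]
    have := (chain_pow_eq_zero_iff hπr hπr' _).mp h3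
    exact Dvd.dvd.mul_left ⟨π ^ (k - (r - j)), by rw [← pow_add]; congr 1; omega⟩ u
  · rintro ⟨c, rfl⟩
    calc π ^ j * (π ^ (r-j) * c) = π ^ r * c := by rw [← mul_assoc, ← pow_add]; congr 2; omega
    _ = 0 := by rw [hπr, zero_mul]

end ChainAux

section SmulAux

variable {R : Type*} [CommRing R] {M : Type*} [AddCommGroup M] [Module R M]

lemma mem_psmul_iff {a : R} {U : Submodule R M} {v : M} :
    v ∈ a • U ↔ ∃ w ∈ U, a • w = v := by
  rw [← SetLike.mem_coe, Submodule.coe_pointwise_smul]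
  exact Set.mem_smul_set

lemma psmul_le_iff {a : R} {U U' : Submodule R M} :
    a • U ≤ U' ↔ ∀ v ∈ U, a • v ∈ U' := by
  constructor
  · intro h v hv
    exact h (Submodule.smul_mem_pointwise_smul v a U hv)
  · intro h u hu
    obtain ⟨w, hw, rfl⟩ := mem_psmul_iff.mp hu
    exact h w hw

end SmulAux

section ModelAux

variable {R : Type*} [CommRing R]

/-- determinant of a pair of vectors in `Fin 2 → R` -/
def dd (x y : Fin 2 → R) : R := x 0 * y 1 - x 1 * y 0

/-- unimodular vectors -/
def unim (x : Fin 2 → R) : Prop := IsUnit (x 0) ∨ IsUnit (x 1)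

lemma dd_anti (x y : Fin 2 → R) : dd y x = - dd x y := by simp [dd]; ring

lemma dd_eq_zero_of_mem {c : R} {x y : Fin 2 → R}
    (h : c • x ∈ Submodule.span R {y}) : c * dd x y = 0 := by
  obtain ⟨e, he⟩ := Submodule.mem_span_singleton.mp h
  have h0 : c * x 0 = e * y 0 := congrFun he.symm 0
  have h1 : c * x 1 = e * y 1 := congrFun he.symm 1
  simp only [dd]
  linear_combination y 1 * h0 - y 0 * h1

lemma mem_of_dd_eq_zero {c : R} {x y : Fin 2 → R} (hy : unim y)
    (h : c * dd x y = 0) : c • x ∈ Submodule.span R {y} := by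
  have key : c * (x 0 * y 1) = c * (x 1 * y 0) := by
    simp only [dd] at h; linear_combination h
  rcases hy with hu | hu
  · obtain ⟨u, hu⟩ := hu
    have huu : (↑u : R) * ↑u⁻¹ = 1 := u.mul_inv
    refine Submodule.mem_span_singleton.mpr ⟨c * x 0 * ↑u⁻¹, ?_⟩
    funext i
    fin_cases i
    · show c * x 0 * ↑u⁻¹ * y 0 = c * x 0
      linear_combination (-(c * x 0 * ↑u⁻¹)) * hu + c * x 0 * huu
    · show c * x 0 * ↑u⁻¹ * y 1 = c * x 1
      linear_combination (↑u⁻¹ : R) * key - c * x 1 * ↑u⁻¹ * hu + c * x 1 * huu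
  · obtain ⟨u, hu⟩ := hu
    have huu : (↑u : R) * ↑u⁻¹ = 1 := u.mul_inv
    refine Submodule.mem_span_singleton.mpr ⟨c * x 1 * ↑u⁻¹, ?_⟩
    funext i
    fin_cases i
    · show c * x 1 * ↑u⁻¹ * y 0 = c * x 0
      linear_combination (-(↑u⁻¹ : R)) * key - c * x 0 * ↑u⁻¹ * hu + c * x 0 * huu
    · show c * x 1 * ↑u⁻¹ * y 1 = c * x 1
      linear_combination (-(c * x 1 * ↑u⁻¹)) * hu + c * x 1 * huu

lemma psmul_span_le_iff {c : R} {x y : Fin 2 → R} (hy : unim y) :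
    c • Submodule.span R {x} ≤ Submodule.span R {y} ↔ c * dd x y = 0 := by
  constructor
  · intro h
    exact dd_eq_zero_of_mem (h (Submodule.smul_mem_pointwise_smul x c _
      (Submodule.mem_span_singleton_self x)))
  · intro h
    rw [psmul_le_iff]
    intro v hv
    obtain ⟨e, rfl⟩ := Submodule.mem_span_singleton.mp hv
    rw [smul_comm c e x]
    exact Submodule.smul_mem _ e (mem_of_dd_eq_zero hy h)

lemma span_eq_span_iff_dd {x y : Fin 2 → R} (hx : unim x) (hy : unim y) :
    Submodule.span R {x} = Submodule.span R {y} ↔ dd x y = 0 := by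
  constructor
  · intro h
    have : (1:R) • x ∈ Submodule.span R {y} := by
      rw [← h]; simpa using Submodule.mem_span_singleton_self x
    simpa using dd_eq_zero_of_mem this
  · intro h
    apply le_antisymm
    · rw [Submodule.span_singleton_le_iff_mem]
      simpa using mem_of_dd_eq_zero hy (c := 1) (by rw [one_mul, h])
    · rw [Submodule.span_singleton_le_iff_mem]
      have h' : dd y x = 0 := by rw [dd_anti, h, neg_zero]
      simpa using mem_of_dd_eq_zero hx (c := 1) (by rw [one_mul, h'])

end ModelAux
section BoundaryAux

variable {R : Type*} [CommRing R] [IsLocalRing R]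
variable {π : R} {r : ℕ} (hr : 1 ≤ r) (hmax : IsLocalRing.maximalIdeal R = Ideal.span {π})
  (hπr : π ^ r = 0) (hπr' : π ^ (r-1) ≠ 0)

include hr hmax hπr hπr'

/-- spans of unimodular vectors are in the boundary -/
lemma span_mem_boundary {x : Fin 2 → R} (hx : unim x) :
    Submodule.span R {x} ∈ boundary π r := by
  constructor
  · intro hle
    rcases hx with hu | hu
    · obtain ⟨u, hu⟩ := hu
      have he : (π ^ (r-1)) • (![0,1] : Fin 2 → R) ∈ (π ^ (r-1)) • (⊤ : Submodule R (Fin 2 → R)) :=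
        Submodule.smul_mem_pointwise_smul _ _ _ Submodule.mem_top
      obtain ⟨c, hc⟩ := Submodule.mem_span_singleton.mp (hle he)
      have h0 : c * x 0 = π ^ (r-1) * 0 := congrFun hc 0
      have h1 : c * x 1 = π ^ (r-1) * 1 := congrFun hc 1
      simp only [mul_zero] at h0
      have hc0 : c = 0 := by
        rw [← hu] at h0
        exact (Units.mul_left_eq_zero u).mp h0
      rw [hc0, zero_mul, mul_one] at h1
      exact hπr' h1.symm
    · obtain ⟨u, hu⟩ := hu
      have he : (π ^ (r-1)) • (![1,0] : Fin 2 → R) ∈ (π ^ (r-1)) • (⊤ : Submodule R (Fin 2 → R)) :=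
        Submodule.smul_mem_pointwise_smul _ _ _ Submodule.mem_top
      obtain ⟨c, hc⟩ := Submodule.mem_span_singleton.mp (hle he)
      have h0 : c * x 0 = π ^ (r-1) * 1 := congrFun hc 0
      have h1 : c * x 1 = π ^ (r-1) * 0 := congrFun hc 1
      simp only [mul_zero] at h1
      have hc0 : c = 0 := by
        rw [← hu] at h1
        exact (Units.mul_left_eq_zero u).mp h1
      rw [hc0, zero_mul, mul_one] at h0
      exact hπr' h0.symm
  · intro hle
    have hx' : x ∈ π • (⊤ : Submodule R (Fin 2 → R)) :=
      hle (Submodule.mem_span_singleton_self x)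
    obtain ⟨w, -, hw⟩ := mem_psmul_iff.mp hx'
    rcases hx with hu | hu
    · have : IsUnit (π * w 0) := by rw [show π * w 0 = x 0 from congrFun hw 0]; exact hu
      exact (chain_not_isUnit_pi hπr hπr') (isUnit_of_mul_isUnit_left this)
    · have : IsUnit (π * w 1) := by rw [show π * w 1 = x 1 from congrFun hw 1]; exact hu
      exact (chain_not_isUnit_pi hπr hπr') (isUnit_of_mul_isUnit_left this)

/-- boundary submodules are spans of unimodular vectors -/
lemma boundary_eq_span {U : Submodule R (Fin 2 → R)} (hU : U ∈ boundary π r) :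
    ∃ x : Fin 2 → R, unim x ∧ U = Submodule.span R {x} := by
  obtain ⟨hU1, hU2⟩ := hU
  obtain ⟨x, hxU, hxn⟩ := SetLike.not_le_iff_exists.mp hU2
  have hx : unim x := by
    by_contra h
    rw [unim, not_or] at h
    obtain ⟨w0, hw0⟩ := chain_pi_dvd hmax h.1
    obtain ⟨w1, hw1⟩ := chain_pi_dvd hmax h.2
    apply hxn
    rw [mem_psmul_iff]
    refine ⟨![w0, w1], Submodule.mem_top, ?_⟩
    funext i; fin_cases i
    · exact hw0.symm
    · exact hw1.symm
  refine ⟨x, hx, le_antisymm ?_ ((Submodule.span_singleton_le_iff_mem x U).mpr hxU)⟩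
  intro v hv
  rcases hx with hu | hu
  · obtain ⟨u, hu⟩ := hu
    set c : R := v 0 * ↑u⁻¹ with hc
    set d : R := v 1 - v 0 * ↑u⁻¹ * x 1 with hd
    have hdec : v = c • x + d • ![0,1] := by
      funext i; fin_cases i
      · show v 0 = c * x 0 + d * 0
        rw [mul_zero, add_zero, hc, ← hu]
        calc v 0 = v 0 * (↑u⁻¹ * ↑u) := by rw [u.inv_mul, mul_one]
        _ = v 0 * ↑u⁻¹ * ↑u := by ring
      · show v 1 = c * x 1 + d * 1
        rw [mul_one, hc, hd]; ring
    have hde : d • (![0,1] : Fin 2 → R) ∈ U := by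
      have : d • (![0,1] : Fin 2 → R) = v - c • x := by rw [hdec]; abel
      rw [this]
      exact Submodule.sub_mem U hv (Submodule.smul_mem U c hxU)
    have hd0 : d = 0 := by
      by_contra hdne
      obtain ⟨k, hk, u', hu', hdu⟩ := chain_exists_unit_pow hmax hπr hπr' d
      have hkr : k ≤ r - 1 := by
        rcases Nat.lt_or_ge k r with h | h
        · omega
        · exfalso; apply hdne
          rw [hdu, show k = r from le_antisymm hk h, hπr, mul_zero]
      obtain ⟨u'', hu''⟩ := hu'
      have he2 : (π ^ (r-1)) • (![0,1] : Fin 2 → R) ∈ U := by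
        have : (π ^ (r-1)) • (![0,1] : Fin 2 → R)
            = (π ^ (r-1-k) * ↑u''⁻¹) • d • (![0,1] : Fin 2 → R) := by
          rw [smul_smul]; congr 1
          rw [hdu, ← hu'']
          symm
          calc π ^ (r-1-k) * ↑u''⁻¹ * (↑u'' * π ^ k)
              = π ^ (r-1-k) * π ^ k * (↑u''⁻¹ * ↑u'') := by ring
          _ = π ^ (r-1) := by rw [u''.inv_mul, mul_one, ← pow_add]; congr 1; omega
        rw [this]
        exact Submodule.smul_mem U _ hde
      apply hU1
      intro w hw
      obtain ⟨t, -, rfl⟩ := mem_psmul_iff.mp hw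
      have hwdec : (π ^ (r-1)) • t
          = (π ^ (r-1) * t 0 * ↑u⁻¹) • x + (t 1 - t 0 * ↑u⁻¹ * x 1) • ((π ^ (r-1)) • ![0,1]) := by
        funext i; fin_cases i
        · show π ^ (r-1) * t 0
            = π ^ (r-1) * t 0 * ↑u⁻¹ * x 0 + (t 1 - t 0 * ↑u⁻¹ * x 1) * (π ^ (r-1) * 0)
          rw [← hu]
          have huu : (↑u⁻¹ : R) * ↑u = 1 := u.inv_mul
          linear_combination (π ^ (r-1) * t 0) * huu.symm
        · show π ^ (r-1) * t 1
            = π ^ (r-1) * t 0 * ↑u⁻¹ * x 1 + (t 1 - t 0 * ↑u⁻¹ * x 1) * (π ^ (r-1) * 1)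
          ring
      rw [hwdec]
      exact Submodule.add_mem U (Submodule.smul_mem U _ hxU) (Submodule.smul_mem U _ he2)
    rw [Submodule.mem_span_singleton]
    exact ⟨c, by rw [hdec, hd0, zero_smul, add_zero]⟩
  · obtain ⟨u, hu⟩ := hu
    set c : R := v 1 * ↑u⁻¹ with hc
    set d : R := v 0 - v 1 * ↑u⁻¹ * x 0 with hd
    have hdec : v = c • x + d • ![1,0] := by
      funext i; fin_cases i
      · show v 0 = c * x 0 + d * 1
        rw [mul_one, hc, hd]; ring
      · show v 1 = c * x 1 + d * 0
        rw [mul_zero, add_zero, hc, ← hu]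
        calc v 1 = v 1 * (↑u⁻¹ * ↑u) := by rw [u.inv_mul, mul_one]
        _ = v 1 * ↑u⁻¹ * ↑u := by ring
    have hde : d • (![1,0] : Fin 2 → R) ∈ U := by
      have : d • (![1,0] : Fin 2 → R) = v - c • x := by rw [hdec]; abel
      rw [this]
      exact Submodule.sub_mem U hv (Submodule.smul_mem U c hxU)
    have hd0 : d = 0 := by
      by_contra hdne
      obtain ⟨k, hk, u', hu', hdu⟩ := chain_exists_unit_pow hmax hπr hπr' d
      have hkr : k ≤ r - 1 := by
        rcases Nat.lt_or_ge k r with h | h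
        · omega
        · exfalso; apply hdne
          rw [hdu, show k = r from le_antisymm hk h, hπr, mul_zero]
      obtain ⟨u'', hu''⟩ := hu'
      have he2 : (π ^ (r-1)) • (![1,0] : Fin 2 → R) ∈ U := by
        have : (π ^ (r-1)) • (![1,0] : Fin 2 → R)
            = (π ^ (r-1-k) * ↑u''⁻¹) • d • (![1,0] : Fin 2 → R) := by
          rw [smul_smul]; congr 1
          rw [hdu, ← hu'']
          symm
          calc π ^ (r-1-k) * ↑u''⁻¹ * (↑u'' * π ^ k)
              = π ^ (r-1-k) * π ^ k * (↑u''⁻¹ * ↑u'') := by ring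
          _ = π ^ (r-1) := by rw [u''.inv_mul, mul_one, ← pow_add]; congr 1; omega
        rw [this]
        exact Submodule.smul_mem U _ hde
      apply hU1
      intro w hw
      obtain ⟨t, -, rfl⟩ := mem_psmul_iff.mp hw
      have hwdec : (π ^ (r-1)) • t
          = (π ^ (r-1) * t 1 * ↑u⁻¹) • x + (t 0 - t 1 * ↑u⁻¹ * x 0) • ((π ^ (r-1)) • ![1,0]) := by
        funext i; fin_cases i
        · show π ^ (r-1) * t 0
            = π ^ (r-1) * t 1 * ↑u⁻¹ * x 0 + (t 0 - t 1 * ↑u⁻¹ * x 0) * (π ^ (r-1) * 1)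
          ring
        · show π ^ (r-1) * t 1
            = π ^ (r-1) * t 1 * ↑u⁻¹ * x 1 + (t 0 - t 1 * ↑u⁻¹ * x 0) * (π ^ (r-1) * 0)
          rw [← hu]
          have huu : (↑u⁻¹ : R) * ↑u = 1 := u.inv_mul
          linear_combination (π ^ (r-1) * t 1) * huu.symm
      rw [hwdec]
      exact Submodule.add_mem U (Submodule.smul_mem U _ hxU) (Submodule.smul_mem U _ he2)
    rw [Submodule.mem_span_singleton]
    exact ⟨c, by rw [hdec, hd0, zero_smul, add_zero]⟩

end BoundaryAux
section DistAux

variable {R : Type*} [CommRing R] [IsLocalRing R]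
variable {π : R} {r : ℕ} (hr : 1 ≤ r) (hmax : IsLocalRing.maximalIdeal R = Ideal.span {π})
  (hπr : π ^ r = 0) (hπr' : π ^ (r-1) ≠ 0)
variable {α : ℕ} (hα : 1 ≤ α) (hαr : α ≤ r)

include hmax hπr hπr' hα hαr in
lemma chain_killer (a : R) : π ^ (α - 1) * a = 0 ↔ π ^ (r - α + 1) ∣ a := by
  rw [chain_pow_mul_eq_zero_iff hmax hπr hπr' (by omega : α - 1 ≤ r) a,
    show r - (α - 1) = r - α + 1 by omega]

include hπr in
lemma nmin_mem_nonempty {x y : Fin 2 → R} (hy : unim y) :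
    Set.Nonempty {m : ℕ | (π ^ m) • Submodule.span R {x} ≤ Submodule.span R {y}} :=
  ⟨r, (psmul_span_le_iff hy).mpr (by rw [hπr, zero_mul])⟩

include hr hmax hπr hπr' hα hαr in
lemma dist_ge_of_not_dvd {x y : Fin 2 → R} (hx : unim x) (hy : unim y)
    (hnd : ¬ π ^ (r - α + 1) ∣ dd x y) :
    2 * α ≤ distMod π (Submodule.span R {x}) (Submodule.span R {y}) := by
  have hd1 : π ^ (α - 1) * dd x y ≠ 0 := fun h => hnd ((chain_killer hmax hπr hπr' hα hαr _).mp h)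
  have hd2 : π ^ (α - 1) * dd y x ≠ 0 := by
    rw [dd_anti, mul_neg, neg_ne_zero]
    exact hd1
  have key : ∀ (a b : Fin 2 → R), unim b → π ^ (α - 1) * dd a b ≠ 0 →
      α ≤ nmin π (Submodule.span R {a}) (Submodule.span R {b}) := by
    intro a b hb hd
    apply le_csInf (nmin_mem_nonempty hπr hb)
    intro m hm
    rw [Set.mem_setOf_eq, psmul_span_le_iff hb] at hm
    by_contra hlt
    push_neg at hlt
    have : π ^ (α - 1) * dd a b = π ^ (α - 1 - m) * (π ^ m * dd a b) := by
      rw [← mul_assoc, ← pow_add]; congr 2; omega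
    rw [this, hm, mul_zero] at hd
    exact hd rfl
  have h1 := key x y hy hd1
  have h2 := key y x hx hd2
  rw [distMod]
  omega

include hr hmax hπr hπr' hα hαr in
lemma not_dvd_of_dist_ge {x y : Fin 2 → R} (hx : unim x) (hy : unim y)
    (h : 2 * α ≤ distMod π (Submodule.span R {x}) (Submodule.span R {y})) :
    ¬ π ^ (r - α + 1) ∣ dd x y := by
  intro hdvd
  have hd1 : π ^ (α - 1) * dd x y = 0 := (chain_killer hmax hπr hπr' hα hαr _).mpr hdvd
  have hd2 : π ^ (α - 1) * dd y x = 0 := by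
    rw [dd_anti, mul_neg, neg_eq_zero]
    exact hd1
  have h1 : nmin π (Submodule.span R {x}) (Submodule.span R {y}) ≤ α - 1 :=
    Nat.sInf_le ((psmul_span_le_iff hy).mpr hd1)
  have h2 : nmin π (Submodule.span R {y}) (Submodule.span R {x}) ≤ α - 1 :=
    Nat.sInf_le ((psmul_span_le_iff hx).mpr hd2)
  rw [distMod] at h
  omega

end DistAux

section CountAux

variable {R : Type*} [CommRing R] [IsLocalRing R]
variable {π : R} {r : ℕ} (hr : 1 ≤ r) (hmax : IsLocalRing.maximalIdeal R = Ideal.span {π})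
  (hπr : π ^ r = 0) (hπr' : π ^ (r-1) ≠ 0)

include hr hmax hπr hπr' in
lemma card_quot_step {k : ℕ} (hk : k < r) :
    Nat.card (R ⧸ Ideal.span {π ^ (k+1)}) =
      Nat.card (R ⧸ Ideal.span {π ^ k}) * Nat.card (R ⧸ IsLocalRing.maximalIdeal R) := by
  set S : Ideal R := Ideal.span {π ^ (k+1)} with hS
  set T : Ideal R := Ideal.span {π ^ k} with hT
  have hST : S ≤ T := by
    apply Ideal.span_singleton_le_span_singleton.mpr
    exact ⟨π, by rw [pow_succ]⟩
  set φ : R →ₗ[R] R ⧸ S := S.mkQ.comp ((π ^ k) • LinearMap.id) with hφ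
  have hr0 : LinearMap.range ((π ^ k) • (LinearMap.id : R →ₗ[R] R)) = T := by
    ext y
    simp only [LinearMap.mem_range, LinearMap.smul_apply, LinearMap.id_coe, id_eq, smul_eq_mul]
    rw [hT, Ideal.mem_span_singleton]
    exact ⟨fun ⟨a, h⟩ => ⟨a, h.symm⟩, fun ⟨a, h⟩ => ⟨a, h.symm⟩⟩
  have hrange : LinearMap.range φ = Submodule.map S.mkQ T := by
    rw [hφ, LinearMap.range_comp, hr0]
  have hker : LinearMap.ker φ = IsLocalRing.maximalIdeal R := by
    ext a
    simp only [hφ, LinearMap.mem_ker, LinearMap.comp_apply, LinearMap.smul_apply,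
      LinearMap.id_coe, id_eq, smul_eq_mul, Submodule.mkQ_apply]
    rw [Submodule.Quotient.mk_eq_zero, hS, Ideal.mem_span_singleton]
    have h1 : π ^ (r - (k+1)) * (π ^ k * a) = π ^ (r-1) * a := by
      rw [← mul_assoc, ← pow_add]; congr 2; omega
    calc π ^ (k+1) ∣ π ^ k * a
        ↔ π ^ (r - (r - (k+1))) ∣ π ^ k * a := by rw [show r - (r-(k+1)) = k+1 by omega]
      _ ↔ π ^ (r - (k+1)) * (π ^ k * a) = 0 :=
          (chain_pow_mul_eq_zero_iff hmax hπr hπr' (by omega : r - (k+1) ≤ r) _).symm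
      _ ↔ π ^ (r-1) * a = 0 := by rw [h1]
      _ ↔ π ^ (r - (r-1)) ∣ a := chain_pow_mul_eq_zero_iff hmax hπr hπr' (by omega : r - 1 ≤ r) a
      _ ↔ π ∣ a := by rw [show r - (r-1) = 1 by omega, pow_one]
      _ ↔ a ∈ IsLocalRing.maximalIdeal R := by rw [hmax, Ideal.mem_span_singleton]
  have e1 : ((R ⧸ S) ⧸ (Submodule.map S.mkQ T)) ≃ₗ[R] R ⧸ T :=
    Submodule.quotientQuotientEquivQuotient S T hST
  have e2 : (R ⧸ LinearMap.ker φ) ≃ₗ[R] LinearMap.range φ := φ.quotKerEquivRange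
  have hcard1 : Nat.card (R ⧸ S) =
      Nat.card ((R ⧸ S) ⧸ (Submodule.map S.mkQ T)) * Nat.card (Submodule.map S.mkQ T) := by
    have := AddSubgroup.card_eq_card_quotient_mul_card_addSubgroup
      (α := R ⧸ S) ((Submodule.map S.mkQ T).toAddSubgroup)
    exact this
  have hcard2 : Nat.card (Submodule.map S.mkQ T) = Nat.card (R ⧸ IsLocalRing.maximalIdeal R) := by
    rw [← hrange, ← Nat.card_congr e2.toEquiv, hker]
  rw [hcard1, Nat.card_congr e1.toEquiv, hcard2]

include hr hmax hπr hπr' in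
lemma card_quot_pow {k : ℕ} (hk : k ≤ r) :
    Nat.card (R ⧸ Ideal.span {π ^ k}) = Nat.card (R ⧸ IsLocalRing.maximalIdeal R) ^ k := by
  induction k with
  | zero =>
    rw [pow_zero, pow_zero, Ideal.span_singleton_one]
    haveI : Subsingleton (R ⧸ (⊤ : Ideal R)) :=
      Submodule.Quotient.subsingleton_iff.mpr rfl
    exact Nat.card_of_subsingleton (Submodule.Quotient.mk 0)
  | succ k ih =>
    rw [card_quot_step hr hmax hπr hπr' (by omega), ih (by omega), pow_succ]

end CountAux
section ModelMain

variable {R : Type*} [CommRing R] [Fintype R] [IsLocalRing R]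

theorem card_max_rank_two_model
    (r : ℕ) (hr : 1 ≤ r)
    (π : R) (hmax : IsLocalRing.maximalIdeal R = Ideal.span {π})
    (hπr : π ^ r = 0) (hπr' : π ^ (r - 1) ≠ 0)
    (q : ℕ) (hq : q = Nat.card (R ⧸ IsLocalRing.maximalIdeal R))
    (α : ℕ) (hα : 1 ≤ α) (hαr : α ≤ r) :
    IsGreatest {n : ℕ | ∃ C : Set (Submodule R (Fin 2 → R)),
      C ⊆ boundary π r ∧ C.Nontrivial ∧
      (∀ U₁ ∈ C, ∀ U₂ ∈ C, U₁ ≠ U₂ → 2 * α ≤ distMod π U₁ U₂) ∧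
      Nat.card C = n} ((q + 1) * q ^ (r - α)) := by
  classical
  obtain ⟨s, hs⟩ : ∃ s : ℕ, s = r - α + 1 := ⟨_, rfl⟩
  have hs1 : 1 ≤ s := by omega
  have hsr : s ≤ r := by omega
  have hcount : ∀ k ≤ r, Nat.card (R ⧸ Ideal.span {π ^ k}) = q ^ k := by
    intro k hk
    rw [card_quot_pow hr hmax hπr hπr' hk, hq]
  have harith : q ^ s + q ^ (s - 1) = (q + 1) * q ^ (r - α) := by
    have h1 : s - 1 = r - α := by omega
    have h2 : s = (r - α) + 1 := by omega
    rw [h1, h2, pow_succ]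
    ring
  have hπs : (π : R) ^ s = π * π ^ (s - 1) := by
    conv_lhs => rw [show s = (s-1)+1 by omega]
    rw [pow_succ']
  constructor
  · -- membership: construct an extremal code
    set f1 : (R ⧸ Ideal.span {π ^ s}) → R :=
      Function.surjInv (Submodule.Quotient.mk_surjective _) with hf1
    set f2 : (R ⧸ Ideal.span {π ^ (s-1)}) → R :=
      Function.surjInv (Submodule.Quotient.mk_surjective _) with hf2
    have hf1e : ∀ a, Submodule.Quotient.mk (f1 a) = a := fun a =>
      Function.surjInv_eq (Submodule.Quotient.mk_surjective _) a
    have hf2e : ∀ a, Submodule.Quotient.mk (f2 a) = a := fun a =>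
      Function.surjInv_eq (Submodule.Quotient.mk_surjective _) a
    set vec : (R ⧸ Ideal.span {π ^ s}) ⊕ (R ⧸ Ideal.span {π ^ (s-1)}) → (Fin 2 → R) :=
      Sum.elim (fun a => ![1, f1 a]) (fun b => ![π * f2 b, 1]) with hvec
    have hunim : ∀ p, unim (vec p) := by
      rintro (a | b)
      · left
        show IsUnit ((![1, f1 a] : Fin 2 → R) 0)
        simp
      · right
        show IsUnit ((![π * f2 b, 1] : Fin 2 → R) 1)
        simp
    have hsep : ∀ p p', p ≠ p' → ¬ π ^ s ∣ dd (vec p) (vec p') := by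
      rintro (a | b) (a' | b') hne hdvd
      · have hdd : dd (vec (Sum.inl a)) (vec (Sum.inl a')) = f1 a' - f1 a := by
          show (1 : R) * f1 a' - f1 a * 1 = _
          ring
        rw [hdd] at hdvd
        apply hne
        have : (Submodule.Quotient.mk (f1 a') : R ⧸ Ideal.span {π ^ s})
            = Submodule.Quotient.mk (f1 a) :=
          (Submodule.Quotient.eq _).mpr (Ideal.mem_span_singleton.mpr hdvd)
        rw [hf1e, hf1e] at this
        rw [this]
      · -- inl / inr : determinant is a unit
        have hdd : dd (vec (Sum.inl a)) (vec (Sum.inr b')) = 1 - f1 a * (π * f2 b') := by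
          show (1 : R) * 1 - f1 a * (π * f2 b') = _
          ring
        rw [hdd] at hdvd
        have hπ1 : π ∣ 1 := by
          have hp : π ∣ 1 - f1 a * (π * f2 b') :=
            dvd_trans (dvd_pow_self π (by omega : s ≠ 0)) hdvd
        -- 1 = (1 - f1 a * (π * f2 b')) + π * (f1 a * f2 b')
          have : (1 : R) = (1 - f1 a * (π * f2 b')) + π * (f1 a * f2 b') := by ring
          rw [this]
          exact dvd_add hp ⟨f1 a * f2 b', rfl⟩
        exact chain_not_isUnit_pi hπr hπr' (isUnit_of_dvd_one hπ1)
      · have hdd : dd (vec (Sum.inr b)) (vec (Sum.inl a')) = π * f2 b * f1 a' - 1 := by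
          show π * f2 b * f1 a' - 1 * 1 = _
          ring
        rw [hdd] at hdvd
        have hπ1 : π ∣ 1 := by
          have hp : π ∣ π * f2 b * f1 a' - 1 :=
            dvd_trans (dvd_pow_self π (by omega : s ≠ 0)) hdvd
          have : (1 : R) = π * (f2 b * f1 a') - (π * f2 b * f1 a' - 1) := by ring
          rw [this]
          exact dvd_sub ⟨f2 b * f1 a', rfl⟩ hp
        exact chain_not_isUnit_pi hπr hπr' (isUnit_of_dvd_one hπ1)
      · have hdd : dd (vec (Sum.inr b)) (vec (Sum.inr b')) = π * (f2 b - f2 b') := by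
          show π * f2 b * 1 - 1 * (π * f2 b') = _
          ring
        rw [hdd] at hdvd
        obtain ⟨c, hc⟩ := hdvd
        have hz : π ^ 1 * ((f2 b - f2 b') - π ^ (s-1) * c) = 0 := by
          rw [pow_one]
          linear_combination hc + c * hπs
        have hdvd1 : π ^ (r - 1) ∣ ((f2 b - f2 b') - π ^ (s-1) * c) :=
          (chain_pow_mul_eq_zero_iff hmax hπr hπr' (by omega : 1 ≤ r) _).mp hz
        have hdvd2 : π ^ (s - 1) ∣ ((f2 b - f2 b') - π ^ (s-1) * c) :=
          dvd_trans (pow_dvd_pow π (by omega : s - 1 ≤ r - 1)) hdvd1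
        have hdvd3 : π ^ (s - 1) ∣ (f2 b - f2 b') := by
          have : (f2 b - f2 b') = ((f2 b - f2 b') - π ^ (s-1) * c) + π ^ (s-1) * c := by ring
          rw [this]
          exact dvd_add hdvd2 ⟨c, rfl⟩
        apply hne
        have : (Submodule.Quotient.mk (f2 b) : R ⧸ Ideal.span {π ^ (s-1)})
            = Submodule.Quotient.mk (f2 b') :=
          (Submodule.Quotient.eq _).mpr (Ideal.mem_span_singleton.mpr hdvd3)
        rw [hf2e, hf2e] at this
        rw [this]
    set G : (R ⧸ Ideal.span {π ^ s}) ⊕ (R ⧸ Ideal.span {π ^ (s-1)}) → Submodule R (Fin 2 → R) :=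
      fun p => Submodule.span R {vec p} with hG
    have hGinj : Function.Injective G := by
      intro p p' hpp'
      by_contra hne
      apply hsep p p' hne
      have : dd (vec p) (vec p') = 0 :=
        (span_eq_span_iff_dd (hunim p) (hunim p')).mp hpp'
      rw [this]
      exact dvd_zero _
    refine ⟨Set.range G, ?_, ?_, ?_, ?_⟩
    · rintro U ⟨p, rfl⟩
      exact span_mem_boundary hr hmax hπr hπr' (hunim p)
    · refine ⟨G (Sum.inl (Submodule.Quotient.mk 0)), ⟨_, rfl⟩,
        G (Sum.inr (Submodule.Quotient.mk 0)), ⟨_, rfl⟩, ?_⟩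
      exact hGinj.ne (by simp)
    · rintro U₁ ⟨p, rfl⟩ U₂ ⟨p', rfl⟩ hne
      have hpp' : p ≠ p' := fun h => hne (by rw [h])
      exact dist_ge_of_not_dvd hr hmax hπr hπr' hα hαr (hunim p) (hunim p') (hs ▸ hsep p p' hpp')
    · rw [Nat.card_range_of_injective hGinj, Nat.card_sum,
        hcount s hsr, hcount (s-1) (by omega), harith]
  · -- upper bound
    rintro n ⟨C, hCb, -, hCd, rfl⟩
    choose gen hgen1 hgen2 using
      fun (U : C) => boundary_eq_span hr hmax hπr hπr' (hCb U.2)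
    set F : C → (R ⧸ Ideal.span {π ^ s}) ⊕ (R ⧸ Ideal.span {π ^ (s-1)}) := fun U =>
      if h : IsUnit (gen U 0) then
        Sum.inl (Submodule.Quotient.mk (Ring.inverse (gen U 0) * gen U 1))
      else
        Sum.inr (Submodule.Quotient.mk
          (Ring.inverse (gen U 1) * Classical.choose (chain_pi_dvd hmax h))) with hF
    have hFinj : Function.Injective F := by
      intro U U' hFF
      by_contra hne
      have hne' : (U : Submodule R (Fin 2 → R)) ≠ (U' : Submodule R (Fin 2 → R)) :=
        fun h => hne (Subtype.ext h)
      have hd := hCd U.1 U.2 U'.1 U'.2 hne'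
      rw [hgen2 U, hgen2 U'] at hd
      have hnd : ¬ π ^ s ∣ dd (gen U) (gen U') := by
        rw [hs]
        exact not_dvd_of_dist_ge hr hmax hπr hπr' hα hαr (hgen1 U) (hgen1 U') hd
      apply hnd
      by_cases h0 : IsUnit (gen U 0) <;> by_cases h0' : IsUnit (gen U' 0)
      · rw [hF] at hFF
        simp only [dif_pos h0, dif_pos h0'] at hFF
        have hmk := Sum.inl_injective hFF
        have hmem := (Submodule.Quotient.eq _).mp hmk
        obtain ⟨c, hc⟩ := Ideal.mem_span_singleton.mp hmem
        have h1 : gen U 0 * Ring.inverse (gen U 0) = 1 := Ring.mul_inverse_cancel _ h0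
        have h2 : gen U' 0 * Ring.inverse (gen U' 0) = 1 := Ring.mul_inverse_cancel _ h0'
        refine ⟨-(gen U 0 * gen U' 0 * c), ?_⟩
        show gen U 0 * gen U' 1 - gen U 1 * gen U' 0 = _
        linear_combination (-(gen U 0 * gen U' 0)) * hc + (gen U' 0 * gen U 1) * h1
          + (-(gen U 0 * gen U' 1)) * h2
      · rw [hF] at hFF
        simp only [dif_pos h0, dif_neg h0'] at hFF
        exact absurd hFF (by simp)
      · rw [hF] at hFF
        simp only [dif_neg h0, dif_pos h0'] at hFF
        exact absurd hFF (by simp)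
      · rw [hF] at hFF
        simp only [dif_neg h0, dif_neg h0'] at hFF
        have hmk := Sum.inr_injective hFF
        have hmem := (Submodule.Quotient.eq _).mp hmk
        obtain ⟨c, hc⟩ := Ideal.mem_span_singleton.mp hmem
        have h1u : IsUnit (gen U 1) := (hgen1 U).resolve_left h0
        have h1u' : IsUnit (gen U' 1) := (hgen1 U').resolve_left h0'
        have h1 : gen U 1 * Ring.inverse (gen U 1) = 1 := Ring.mul_inverse_cancel _ h1u
        have h2 : gen U' 1 * Ring.inverse (gen U' 1) = 1 := Ring.mul_inverse_cancel _ h1u'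
        have hw : gen U 0 = π * Classical.choose (chain_pi_dvd hmax h0) :=
          Classical.choose_spec (chain_pi_dvd hmax h0)
        have hw' : gen U' 0 = π * Classical.choose (chain_pi_dvd hmax h0') :=
          Classical.choose_spec (chain_pi_dvd hmax h0')
        set w : R := Classical.choose (chain_pi_dvd hmax h0)
        set w' : R := Classical.choose (chain_pi_dvd hmax h0')
        refine ⟨gen U 1 * gen U' 1 * c, ?_⟩
        show gen U 0 * gen U' 1 - gen U 1 * gen U' 0 = _
        linear_combination (π * gen U 1 * gen U' 1) * hc
          + (-(π * gen U' 1 * w)) * h1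
          + (π * gen U 1 * w') * h2
          + gen U' 1 * hw + (-(gen U 1)) * hw'
          + (-(gen U 1 * gen U' 1 * c)) * hπs
    calc Nat.card C
        ≤ Nat.card ((R ⧸ Ideal.span {π ^ s}) ⊕ (R ⧸ Ideal.span {π ^ (s-1)})) :=
          Nat.card_le_card_of_injective F hFinj
      _ = q ^ s + q ^ (s - 1) := by
          rw [Nat.card_sum, hcount s hsr, hcount (s-1) (by omega)]
      _ = (q + 1) * q ^ (r - α) := harith

end ModelMain
section Transfer

variable {R : Type*} [CommRing R]
variable {V : Type*} [AddCommGroup V] [Module R V]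
variable {W : Type*} [AddCommGroup W] [Module R W]

lemma map_psmul (e : V ≃ₗ[R] W) (a : R) (U : Submodule R V) :
    Submodule.map (e : V →ₗ[R] W) (a • U) = a • Submodule.map (e : V →ₗ[R] W) U := by
  ext w
  rw [mem_psmul_iff, Submodule.mem_map]
  constructor
  · rintro ⟨v, hv, rfl⟩
    obtain ⟨u, hu, rfl⟩ := mem_psmul_iff.mp hv
    exact ⟨e u, ⟨u, hu, rfl⟩, (map_smul e a u).symm⟩
  · rintro ⟨w', ⟨v, hv, rfl⟩, rfl⟩
    exact ⟨a • v, Submodule.smul_mem_pointwise_smul v a U hv, map_smul _ a v⟩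

lemma map_top_equiv (e : V ≃ₗ[R] W) :
    Submodule.map (e : V →ₗ[R] W) ⊤ = ⊤ := by
  rw [Submodule.map_top, LinearMap.range_eq_top]
  exact e.surjective

lemma map_le_iff_equiv (e : V ≃ₗ[R] W) {U U' : Submodule R V} :
    Submodule.map (e : V →ₗ[R] W) U ≤ Submodule.map (e : V →ₗ[R] W) U' ↔ U ≤ U' :=
  Submodule.map_le_map_iff_of_injective e.injective U U'

lemma nmin_map (e : V ≃ₗ[R] W) (π : R) (U₁ U₂ : Submodule R V) :
    nmin π (Submodule.map (e : V →ₗ[R] W) U₁) (Submodule.map (e : V →ₗ[R] W) U₂)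
      = nmin π U₁ U₂ := by
  unfold nmin
  congr 1
  ext m
  rw [Set.mem_setOf_eq, Set.mem_setOf_eq, ← map_psmul, map_le_iff_equiv]

lemma distMod_map (e : V ≃ₗ[R] W) (π : R) (U₁ U₂ : Submodule R V) :
    distMod π (Submodule.map (e : V →ₗ[R] W) U₁) (Submodule.map (e : V →ₗ[R] W) U₂)
      = distMod π U₁ U₂ := by
  unfold distMod
  rw [nmin_map, nmin_map]

lemma boundary_map (e : V ≃ₗ[R] W) (π : R) (r : ℕ) (U : Submodule R V) :
    Submodule.map (e : V →ₗ[R] W) U ∈ boundary π r ↔ U ∈ boundary π r := by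
  have h1 : (π ^ (r-1)) • (⊤ : Submodule R W)
      = Submodule.map (e : V →ₗ[R] W) ((π ^ (r-1)) • ⊤) := by
    rw [map_psmul, map_top_equiv]
  have h2 : π • (⊤ : Submodule R W) = Submodule.map (e : V →ₗ[R] W) (π • ⊤) := by
    rw [map_psmul, map_top_equiv]
  unfold boundary
  rw [Set.mem_setOf_eq, Set.mem_setOf_eq, h1, h2, map_le_iff_equiv, map_le_iff_equiv]

lemma code_set_le (e : V ≃ₗ[R] W) (π : R) (r α : ℕ) :
    {n : ℕ | ∃ C : Set (Submodule R V),
      C ⊆ boundary π r ∧ C.Nontrivial ∧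
      (∀ U₁ ∈ C, ∀ U₂ ∈ C, U₁ ≠ U₂ → 2 * α ≤ distMod π U₁ U₂) ∧
      Nat.card C = n} ⊆
    {n : ℕ | ∃ C : Set (Submodule R W),
      C ⊆ boundary π r ∧ C.Nontrivial ∧
      (∀ U₁ ∈ C, ∀ U₂ ∈ C, U₁ ≠ U₂ → 2 * α ≤ distMod π U₁ U₂) ∧
      Nat.card C = n} := by
  rintro n ⟨C, hCb, hCnt, hCd, rfl⟩
  have hinj : Function.Injective (Submodule.map (e : V →ₗ[R] W)) :=
    Submodule.map_injective_of_injective e.injective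
  refine ⟨Submodule.map (e : V →ₗ[R] W) '' C, ?_, ?_, ?_, ?_⟩
  · rintro _ ⟨U, hU, rfl⟩
    exact (boundary_map e π r U).mpr (hCb hU)
  · obtain ⟨a, ha, b, hb, hab⟩ := hCnt
    exact ⟨_, ⟨a, ha, rfl⟩, _, ⟨b, hb, rfl⟩, fun h => hab (hinj h)⟩
  · rintro _ ⟨U₁, h1, rfl⟩ _ ⟨U₂, h2, rfl⟩ hne
    rw [distMod_map]
    exact hCd U₁ h1 U₂ h2 (fun h => hne (by rw [h]))
  · exact (Nat.card_congr (Equiv.Set.image _ C hinj)).symm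

end Transfer


/-- For `d = 2`: `card(2;R;2α) = (q+1) q^{r-α}`, the maximal cardinality of a spherical
code in `V_r` of minimum distance at least `2α`. -/
theorem card_max_rank_two
    {R : Type*} [CommRing R] [Fintype R] [IsLocalRing R]
    {V : Type*} [AddCommGroup V] [Module R V]
    (r : ℕ) (hr : 1 ≤ r) (b : Module.Basis (Fin 2) R V)
    (π : R) (hmax : IsLocalRing.maximalIdeal R = Ideal.span {π})
    (hπr : π ^ r = 0) (hπr' : π ^ (r - 1) ≠ 0)
    (q : ℕ) (hq : q = Nat.card (R ⧸ IsLocalRing.maximalIdeal R))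
    (α : ℕ) (hα : 1 ≤ α) (hαr : α ≤ r) :
    IsGreatest {n : ℕ | ∃ C : Set (Submodule R V),
      C ⊆ boundary π r ∧ C.Nontrivial ∧
      (∀ U₁ ∈ C, ∀ U₂ ∈ C, U₁ ≠ U₂ → 2 * α ≤ distMod π U₁ U₂) ∧
      Nat.card C = n} ((q + 1) * q ^ (r - α)) := by

  have e : V ≃ₗ[R] (Fin 2 → R) := b.equivFun
  have hset : {n : ℕ | ∃ C : Set (Submodule R V),
      C ⊆ boundary π r ∧ C.Nontrivial ∧
      (∀ U₁ ∈ C, ∀ U₂ ∈ C, U₁ ≠ U₂ → 2 * α ≤ distMod π U₁ U₂) ∧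
      Nat.card C = n} =
      {n : ℕ | ∃ C : Set (Submodule R (Fin 2 → R)),
      C ⊆ boundary π r ∧ C.Nontrivial ∧
      (∀ U₁ ∈ C, ∀ U₂ ∈ C, U₁ ≠ U₂ → 2 * α ≤ distMod π U₁ U₂) ∧
      Nat.card C = n} :=
    Set.Subset.antisymm (code_set_le e π r α) (code_set_le e.symm π r α)
  rw [hset]
  exact card_max_rank_two_model r hr π hmax hπr hπr' q hq α hα hαr

end SphericalSubmoduleCodes
end

section
/- Let ε ∈ ∂E_r^(d), let ε̃₁ > ε̃₂ > … > ε̃_{ℓ+1} = 0 be the distinct values among ε₁,…,ε_d, and for each s ∈ {1,…,ℓ+1} let m_s = |{i : ε_i = ε̃_s}|. Then the 𝐞-permutation code C = {[U_δ] : δ ∈ Sym(d)·ε} satisfies |C| = d!/(m₁! m₂! ⋯ m_{ℓ+1}!) and dist(C) = 2·min{ε̃_j − ε̃_i : 1 ≤ j < i ≤ ℓ+1} (the minimum of the positive differences between distinct values of ε). -/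
open Pointwise

namespace SphericalSubmoduleCodes

/-- `U_δ = Rπ^{δ₁}e₁ ⊕ … ⊕ Rπ^{δ_d}e_d`. -/
noncomputable def Udelta {R : Type*} [CommRing R] {V : Type*} [AddCommGroup V] [Module R V]
    {d : ℕ} (π : R) (b : Module.Basis (Fin d) R V) (δ : Fin d → ℕ) : Submodule R V :=
  ⨆ i : Fin d, Submodule.span R {(π ^ δ i) • b i}

/-- The `𝐞`-permutation code `{[U_δ] : δ ∈ Sym(d)·ε}`. -/
noncomputable def permCode {R : Type*} [CommRing R] {V : Type*} [AddCommGroup V] [Module R V]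
    {d : ℕ} (π : R) (b : Module.Basis (Fin d) R V) (ε : Fin d → ℕ) : Set (Submodule R V) :=
  {U | ∃ σ : Equiv.Perm (Fin d), U = Udelta π b (ε ∘ σ)}

end SphericalSubmoduleCodes


namespace SphericalSubmoduleCodes

section Aux

variable {R : Type*} [CommRing R] {V : Type*} [AddCommGroup V] [Module R V] {d : ℕ}

lemma Udelta_eq_span (π : R) (b : Module.Basis (Fin d) R V) (δ : Fin d → ℕ) :
    Udelta π b δ = Submodule.span R (Set.range fun i => (π ^ δ i) • b i) := by
  rw [Udelta, Submodule.span_range_eq_iSup]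

lemma mem_Udelta_iff (π : R) (b : Module.Basis (Fin d) R V) (δ : Fin d → ℕ) (x : V) :
    x ∈ Udelta π b δ ↔ ∀ i, ∃ c : R, b.repr x i = c * π ^ δ i := by
  rw [Udelta_eq_span, Submodule.mem_span_range_iff_exists_fun]
  constructor
  · rintro ⟨c, rfl⟩ i
    refine ⟨c i, ?_⟩
    have : (∑ j, c j • π ^ δ j • b j) = ∑ j, (c j * π ^ δ j) • b j := by
      simp [smul_smul]
    rw [this, b.repr_sum_self]
  · intro h
    choose c hc using h
    refine ⟨c, ?_⟩
    have : (∑ j, c j • π ^ δ j • b j) = ∑ j, (c j * π ^ δ j) • b j := by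
      simp [smul_smul]
    rw [this]
    conv_rhs => rw [← b.sum_repr x]
    exact Finset.sum_congr rfl fun j _ => by rw [hc j]

lemma pow_eq_mul_pow_iff (π : R) {r : ℕ} (hπr : π ^ r = 0) (hπr' : π ^ (r - 1) ≠ 0)
    {a c : ℕ} (hc : c ≤ r) : (∃ u : R, π ^ a = u * π ^ c) ↔ c ≤ a := by
  constructor
  · rintro ⟨u, hu⟩
    by_contra h
    push_neg at h
    have ha : a ≤ r - 1 := by omega
    have h1 : π ^ (r - 1) = π ^ a * π ^ (r - 1 - a) := by
      rw [← pow_add]; congr 1; omega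
    have h2 : π ^ (c + (r - 1 - a)) = 0 := by
      have : π ^ (c + (r - 1 - a)) = π ^ r * π ^ (c + (r - 1 - a) - r) := by
        rw [← pow_add]; congr 1; omega
      rw [this, hπr, zero_mul]
    apply hπr'
    rw [h1, hu, mul_assoc, ← pow_add, h2, mul_zero]
  · intro h
    exact ⟨π ^ (a - c), by rw [← pow_add]; congr 1; omega⟩

lemma gen_mem_Udelta (π : R) (b : Module.Basis (Fin d) R V) (δ : Fin d → ℕ) (i : Fin d) :
    (π ^ δ i) • b i ∈ Udelta π b δ := by
  rw [Udelta_eq_span]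
  exact Submodule.subset_span ⟨i, rfl⟩

lemma smul_Udelta_le_iff (π : R) {r : ℕ} (hπr : π ^ r = 0) (hπr' : π ^ (r - 1) ≠ 0)
    (b : Module.Basis (Fin d) R V) (δ δ' : Fin d → ℕ) (hδ' : ∀ i, δ' i ≤ r) (m : ℕ) :
    (π ^ m) • Udelta π b δ ≤ Udelta π b δ' ↔ ∀ i, δ' i ≤ m + δ i := by
  constructor
  · intro h i
    have h1 : (π ^ (m + δ i)) • b i ∈ (π ^ m) • Udelta π b δ := by
      have := Submodule.smul_mem_pointwise_smul _ (π ^ m) _ (gen_mem_Udelta π b δ i)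
      rwa [smul_smul, ← pow_add] at this
    have h2 := (mem_Udelta_iff π b δ' _).mp (h h1) i
    rw [map_smul, b.repr_self] at h2
    simp only [Finsupp.smul_single, smul_eq_mul, mul_one, Finsupp.single_eq_same] at h2
    obtain ⟨c, hc⟩ := h2
    exact (pow_eq_mul_pow_iff π hπr hπr' (hδ' i)).mp ⟨c, hc⟩
  · intro h
    rw [Udelta_eq_span, Submodule.smul_span]
    rw [Submodule.span_le]
    rintro _ ⟨_, ⟨i, rfl⟩, rfl⟩
    have hi := h i
    have hexp : m + δ i = m + δ i - δ' i + δ' i := (Nat.sub_add_cancel hi).symm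
    show (π ^ m) • (π ^ δ i) • b i ∈ Udelta π b δ'
    have heq : (π ^ m) • (π ^ δ i) • b i = (π ^ (m + δ i - δ' i)) • (π ^ δ' i) • b i := by
      rw [smul_smul, smul_smul, ← pow_add, ← pow_add, ← hexp]
    rw [heq]
    exact Submodule.smul_mem _ _ (gen_mem_Udelta π b δ' i)

lemma Udelta_le_iff (π : R) {r : ℕ} (hπr : π ^ r = 0) (hπr' : π ^ (r - 1) ≠ 0)
    (b : Module.Basis (Fin d) R V) (δ δ' : Fin d → ℕ) (hδ' : ∀ i, δ' i ≤ r) :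
    Udelta π b δ ≤ Udelta π b δ' ↔ ∀ i, δ' i ≤ δ i := by
  have := smul_Udelta_le_iff π hπr hπr' b δ δ' hδ' 0
  simpa using this

lemma Udelta_inj (π : R) {r : ℕ} (hπr : π ^ r = 0) (hπr' : π ^ (r - 1) ≠ 0)
    (b : Module.Basis (Fin d) R V) (δ δ' : Fin d → ℕ) (hδ : ∀ i, δ i ≤ r) (hδ' : ∀ i, δ' i ≤ r)
    (h : Udelta π b δ = Udelta π b δ') : δ = δ' := by
  have h1 := (Udelta_le_iff π hπr hπr' b δ δ' hδ').mp h.le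
  have h2 := (Udelta_le_iff π hπr hπr' b δ' δ hδ).mp h.ge
  funext i
  exact le_antisymm (h2 i) (h1 i)

lemma nmin_Udelta (π : R) {r : ℕ} (hπr : π ^ r = 0) (hπr' : π ^ (r - 1) ≠ 0)
    (b : Module.Basis (Fin d) R V) (δ δ' : Fin d → ℕ) (hδ' : ∀ i, δ' i ≤ r) :
    nmin π (Udelta π b δ) (Udelta π b δ') = Finset.univ.sup (fun i => δ' i - δ i) := by
  have hmem : ∀ m : ℕ, (π ^ m) • Udelta π b δ ≤ Udelta π b δ' ↔ ∀ i, δ' i ≤ m + δ i :=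
    smul_Udelta_le_iff π hπr hπr' b δ δ' hδ'
  apply le_antisymm
  · apply Nat.sInf_le
    rw [Set.mem_setOf_eq, hmem]
    intro i
    have : δ' i - δ i ≤ Finset.univ.sup (fun i => δ' i - δ i) :=
      Finset.le_sup (f := fun i => δ' i - δ i) (Finset.mem_univ i)
    omega
  · apply Finset.sup_le
    intro i _
    have hne : {m : ℕ | (π ^ m) • Udelta π b δ ≤ Udelta π b δ'}.Nonempty := by
      refine ⟨Finset.univ.sup (fun i => δ' i - δ i), ?_⟩
      rw [Set.mem_setOf_eq, hmem]
      intro j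
      have : δ' j - δ j ≤ Finset.univ.sup (fun i => δ' i - δ i) :=
        Finset.le_sup (f := fun i => δ' i - δ i) (Finset.mem_univ j)
      omega
    have := Nat.sInf_mem hne
    rw [Set.mem_setOf_eq, hmem] at this
    have := this i
    unfold nmin
    omega

lemma sup_sub_eq {d : ℕ} (f h : Fin d → ℕ) (M : ℕ) (hle : ∀ k, f k - h k ≤ M)
    (k0 : Fin d) (hk0 : M ≤ f k0 - h k0) :
    Finset.univ.sup (fun k => f k - h k) = M :=
  le_antisymm (Finset.sup_le fun k _ => hle k)
    (le_trans hk0 (Finset.le_sup (f := fun k => f k - h k) (Finset.mem_univ k0)))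

end Aux

open MulAction in
lemma card_orbit_set {d : ℕ} (ε : Fin d → ℕ) :
    Nat.card {f : Fin d → ℕ | ∃ σ : Equiv.Perm (Fin d), f = ε ∘ σ} *
      ∏ v ∈ Finset.image ε Finset.univ,
        (Finset.univ.filter (fun i : Fin d => ε i = v)).card.factorial
      = d.factorial := by
  classical
  set G := (Equiv.Perm (Fin d))ᵈᵐᵃ
  have horb : {f : Fin d → ℕ | ∃ σ : Equiv.Perm (Fin d), f = ε ∘ σ} = orbit G ε := by
    ext f
    constructor
    · rintro ⟨σ, rfl⟩
      exact ⟨DomMulAct.mk σ, rfl⟩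
    · rintro ⟨g, rfl⟩
      exact ⟨DomMulAct.mk.symm g, rfl⟩
  rw [horb]
  have hstab : Nat.card (stabilizer G ε) =
      ∏ v ∈ Finset.image ε Finset.univ,
        (Finset.univ.filter (fun i : Fin d => ε i = v)).card.factorial := by
    have e1 : stabilizer G ε ≃ {g : Equiv.Perm (Fin d) // ε ∘ g = ε} :=
      (Equiv.subtypeEquiv DomMulAct.mk.symm (fun _ => DomMulAct.mem_stabilizer_iff))
    rw [Nat.card_congr e1, Nat.card_eq_fintype_card, DomMulAct.stabilizer_card']
    refine Finset.prod_congr rfl fun v _ => ?_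
    rw [Fintype.card_subtype]
  have hG : Nat.card G = d.factorial := by
    rw [← Nat.card_congr (DomMulAct.mk : Equiv.Perm (Fin d) ≃ G), Nat.card_eq_fintype_card,
      Fintype.card_perm, Fintype.card_fin]
  rw [← hstab, ← hG, ← Nat.card_prod]
  exact Nat.card_congr (MulAction.orbitProdStabilizerEquivGroup G ε)

end SphericalSubmoduleCodes

namespace SphericalSubmoduleCodes

/-- Cardinality and minimum distance of an `𝐞`-permutation code:
`|C| = d!/(m₁!⋯m_{ℓ+1}!)` where the `m_s` are the multiplicities of the distinct
values of `ε`, and `dist(C) = 2·min{ε̃_j − ε̃_i}`, the minimum positive difference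
of distinct values of `ε`. -/
theorem permCode_card_and_minDist
    {R : Type*} [CommRing R] [Fintype R] [IsLocalRing R]
    {V : Type*} [AddCommGroup V] [Module R V]
    (d r : ℕ) (hd : 2 ≤ d) (hr : 1 ≤ r) (b : Module.Basis (Fin d) R V)
    (π : R) (hmax : IsLocalRing.maximalIdeal R = Ideal.span {π})
    (hπr : π ^ r = 0) (hπr' : π ^ (r - 1) ≠ 0)
    (ε : Fin d → ℕ)
    (hεanti : ∀ i j : Fin d, i ≤ j → ε j ≤ ε i)
    (hε0 : ε ⟨0, by omega⟩ = r) (hεlast : ε ⟨d - 1, by omega⟩ = 0) :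
    Nat.card (permCode π b ε) =
      d.factorial /
        ∏ v ∈ Finset.image ε Finset.univ,
          (Finset.univ.filter (fun i : Fin d => ε i = v)).card.factorial ∧
    minDist π (permCode π b ε) =
      2 * sInf {k : ℕ | ∃ i j : Fin d, ε j < ε i ∧ k = ε i - ε j} := by
  classical
  have hεr : ∀ i : Fin d, ε i ≤ r := by
    intro i
    rw [← hε0]
    exact hεanti ⟨0, by omega⟩ i (by simp [Fin.le_def])
  have hinj : ∀ σ τ : Equiv.Perm (Fin d),
      Udelta π b (ε ∘ σ) = Udelta π b (ε ∘ τ) → (ε ∘ ⇑σ) = ε ∘ ⇑τ := by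
    intro σ τ h
    exact Udelta_inj π hπr hπr' b _ _ (fun i => hεr _) (fun i => hεr _) h
  constructor
  · -- cardinality
    set S : Set (Fin d → ℕ) := {f | ∃ σ : Equiv.Perm (Fin d), f = ε ∘ σ} with hS
    have himage : permCode π b ε = Udelta π b '' S := by
      ext U
      constructor
      · rintro ⟨σ, rfl⟩
        exact ⟨ε ∘ σ, ⟨σ, rfl⟩, rfl⟩
      · rintro ⟨f, ⟨σ, rfl⟩, rfl⟩
        exact ⟨σ, rfl⟩
    have hcards : Nat.card (permCode π b ε) = Nat.card S := by
      rw [himage, Nat.card_coe_set_eq, Nat.card_coe_set_eq]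
      apply Set.ncard_image_of_injOn
      rintro f ⟨σ, rfl⟩ g ⟨τ, rfl⟩ h
      exact hinj σ τ h
    have hP : 0 < ∏ v ∈ Finset.image ε Finset.univ,
        (Finset.univ.filter (fun i : Fin d => ε i = v)).card.factorial :=
      Finset.prod_pos fun v _ => Nat.factorial_pos _
    have hmul := card_orbit_set ε
    rw [hcards]
    exact (Nat.div_eq_of_eq_mul_left hP hmul.symm).symm
  · -- minimum distance
    have hSdne : {k : ℕ | ∃ i j : Fin d, ε j < ε i ∧ k = ε i - ε j}.Nonempty := by
      refine ⟨ε ⟨0, by omega⟩ - ε ⟨d - 1, by omega⟩, ⟨⟨0, by omega⟩, ⟨d - 1, by omega⟩, ?_, rfl⟩⟩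
      rw [hε0, hεlast]; omega
    set g := sInf {k : ℕ | ∃ i j : Fin d, ε j < ε i ∧ k = ε i - ε j} with hgdef
    obtain ⟨i, j, hij, hgij⟩ := Nat.sInf_mem hSdne
    have hglb : ∀ a c : Fin d, ε c < ε a → g ≤ ε a - ε c := fun a c h =>
      Nat.sInf_le ⟨a, c, h, rfl⟩
    have hijne : i ≠ j := fun h => by rw [h] at hij; omega
    -- the distance between U_ε and U_{ε∘swap i j} is 2g
    have hg' : g = ε i - ε j := hgdef.trans hgij
    have hsup1 : Finset.univ.sup
        (fun k => (ε ∘ ⇑(Equiv.swap i j)) k - (ε ∘ ⇑(1 : Equiv.Perm (Fin d))) k) = g := by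
      rw [hg']
      apply sup_sub_eq _ _ _ ?_ j ?_
      · intro k
        simp only [Function.comp_apply, Equiv.Perm.coe_one, id_eq]
        rcases eq_or_ne k i with rfl | hki
        · rw [Equiv.swap_apply_left]; omega
        rcases eq_or_ne k j with rfl | hkj
        · rw [Equiv.swap_apply_right]
        · rw [Equiv.swap_apply_of_ne_of_ne hki hkj]; omega
      · simp only [Function.comp_apply, Equiv.Perm.coe_one, id_eq, Equiv.swap_apply_right]
        exact le_refl _
    have hsup2 : Finset.univ.sup
        (fun k => (ε ∘ ⇑(1 : Equiv.Perm (Fin d))) k - (ε ∘ ⇑(Equiv.swap i j)) k) = g := by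
      rw [hg']
      apply sup_sub_eq _ _ _ ?_ i ?_
      · intro k
        simp only [Function.comp_apply, Equiv.Perm.coe_one, id_eq]
        rcases eq_or_ne k i with rfl | hki
        · rw [Equiv.swap_apply_left]
        rcases eq_or_ne k j with rfl | hkj
        · rw [Equiv.swap_apply_right]; omega
        · rw [Equiv.swap_apply_of_ne_of_ne hki hkj]; omega
      · simp only [Function.comp_apply, Equiv.Perm.coe_one, id_eq, Equiv.swap_apply_left]
        exact le_refl _
    have mem2g : 2 * g ∈ {n : ℕ | ∃ U₁ ∈ permCode π b ε, ∃ U₂ ∈ permCode π b ε,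
        U₁ ≠ U₂ ∧ distMod π U₁ U₂ = n} := by
      refine ⟨Udelta π b (ε ∘ ⇑(1 : Equiv.Perm (Fin d))), ⟨1, rfl⟩,
        Udelta π b (ε ∘ ⇑(Equiv.swap i j)), ⟨Equiv.swap i j, rfl⟩, ?_, ?_⟩
      · intro h
        have h2 := congrFun (hinj _ _ h) i
        simp only [Function.comp_apply, Equiv.Perm.coe_one, id_eq,
          Equiv.swap_apply_left] at h2
        omega
      · rw [distMod,
          nmin_Udelta π hπr hπr' b (ε ∘ ⇑(1 : Equiv.Perm (Fin d))) (ε ∘ ⇑(Equiv.swap i j))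
            (fun k => hεr _),
          nmin_Udelta π hπr hπr' b (ε ∘ ⇑(Equiv.swap i j)) (ε ∘ ⇑(1 : Equiv.Perm (Fin d)))
            (fun k => hεr _), hsup1, hsup2]
        omega
    have hlb : ∀ n ∈ {n : ℕ | ∃ U₁ ∈ permCode π b ε, ∃ U₂ ∈ permCode π b ε,
        U₁ ≠ U₂ ∧ distMod π U₁ U₂ = n}, 2 * g ≤ n := by
      rintro n ⟨U₁, ⟨σ, rfl⟩, U₂, ⟨τ, rfl⟩, hne, rfl⟩
      have hδne : (ε ∘ ⇑σ) ≠ ε ∘ ⇑τ := fun h => hne (by rw [h])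
      have hsum : (∑ k, ε (τ k)) = ∑ k, ε (σ k) := by
        rw [Equiv.sum_comp σ ε, Equiv.sum_comp τ ε]
      have h₁ : ∃ k, ε (σ k) < ε (τ k) := by
        by_contra h
        push_neg at h
        apply hδne
        funext k
        have := (Finset.sum_eq_sum_iff_of_le (fun k _ => h k)).mp hsum k (Finset.mem_univ k)
        exact this.symm
      have h₂ : ∃ k, ε (τ k) < ε (σ k) := by
        by_contra h
        push_neg at h
        apply hδne
        funext k
        have := (Finset.sum_eq_sum_iff_of_le (fun k _ => h k)).mp hsum.symm k (Finset.mem_univ k)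
        exact this
      obtain ⟨k₁, hk₁⟩ := h₁
      obtain ⟨k₂, hk₂⟩ := h₂
      rw [distMod,
        nmin_Udelta π hπr hπr' b (ε ∘ ⇑σ) (ε ∘ ⇑τ) (fun k => hεr _),
        nmin_Udelta π hπr hπr' b (ε ∘ ⇑τ) (ε ∘ ⇑σ) (fun k => hεr _)]
      have e₁ : ε (τ k₁) - ε (σ k₁) ≤
          Finset.univ.sup (fun k => (ε ∘ ⇑τ) k - (ε ∘ ⇑σ) k) :=
        Finset.le_sup (f := fun k => (ε ∘ ⇑τ) k - (ε ∘ ⇑σ) k) (Finset.mem_univ k₁)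
      have e₂ : ε (σ k₂) - ε (τ k₂) ≤
          Finset.univ.sup (fun k => (ε ∘ ⇑σ) k - (ε ∘ ⇑τ) k) :=
        Finset.le_sup (f := fun k => (ε ∘ ⇑σ) k - (ε ∘ ⇑τ) k) (Finset.mem_univ k₂)
      have g₁ := hglb (τ k₁) (σ k₁) hk₁
      have g₂ := hglb (σ k₂) (τ k₂) hk₂
      omega
    rw [minDist]
    exact le_antisymm (Nat.sInf_le mem2g) (le_csInf ⟨_, mem2g⟩ hlb)


end SphericalSubmoduleCodes
end
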